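/- arXiv:1402.4658 — 3 statements merged into one kernel-verified Lean document; each statement's English description precedes it below -/
import Mathlib

section
/- Let n ≥ 1 and let a_1 ≤ a_2 ≤ … ≤ a_n be natural numbers with each a_i ≥ 3. Then ∑_{i=1}^{n} 1/a_i = n/2 − 1 (as rationals) holds if and only if the tuple (a_1, …, a_n) is one of the following seventeen tuples: (3,7,42), (3,8,24), (3,9,18), (3,10,15), (3,12,12), (4,5,20), (4,6,12), (4,8,8), (5,5,10), (6,6,6), (3,3,4,12), (3,3,6,6), (3,4,4,6), (4,4,4,4), (3,3,3,3,6), (3,3,3,4,4), (3,3,3,3,3,3). -/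
set_option maxHeartbeats 4000000

private lemma sol3 (x y z : ℕ) (hx : 3 ≤ x) (hxy : x ≤ y) (hyz : y ≤ z)
    (key : 2*(y*z) + 2*(x*z) + 2*(x*y) = x*y*z) :
    (x = 3 ∧ y = 7 ∧ z = 42) ∨ (x = 3 ∧ y = 8 ∧ z = 24) ∨
    (x = 3 ∧ y = 9 ∧ z = 18) ∨ (x = 3 ∧ y = 10 ∧ z = 15) ∨
    (x = 3 ∧ y = 12 ∧ z = 12) ∨ (x = 4 ∧ y = 5 ∧ z = 20) ∨
    (x = 4 ∧ y = 6 ∧ z = 12) ∨ (x = 4 ∧ y = 8 ∧ z = 8) ∨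
    (x = 5 ∧ y = 5 ∧ z = 10) ∨ (x = 6 ∧ y = 6 ∧ z = 6) := by
  have e1 : x*z ≤ y*z := Nat.mul_le_mul hxy le_rfl
  have e2 : x*y ≤ y*z := Nat.mul_le_mul hxy hyz
  have hx6 : x ≤ 6 := by
    by_contra hc
    have h7 : 7 ≤ x := by omega
    have h7' : 7*(y*z) ≤ x*(y*z) := Nat.mul_le_mul h7 le_rfl
    nlinarith [key, e1, e2, h7']
  have e3 : x*y ≤ x*z := Nat.mul_le_mul le_rfl hyz
  have hcan : (x*y)*z ≤ (2*y + 4*x)*z := by nlinarith [key, e3]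
  have hxy2 : x*y ≤ 2*y + 4*x := Nat.le_of_mul_le_mul_right hcan (by omega)
  have hy12 : y ≤ 12 := by
    by_contra hc
    have h13 : 13 ≤ y := by omega
    have p1 : 3*y ≤ x*y := Nat.mul_le_mul hx le_rfl
    have p2 : x*13 ≤ x*y := Nat.mul_le_mul le_rfl h13
    nlinarith [hxy2, p1, p2]
  clear e1 e2 e3 hcan hxy2
  interval_cases x <;> interval_cases y <;> omega

private lemma sol4 (w x y z : ℕ) (hw : 3 ≤ w) (hwx : w ≤ x) (hxy : x ≤ y) (hyz : y ≤ z)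
    (key : x*y*z + w*y*z + w*x*z + w*x*y = w*x*y*z) :
    (w = 3 ∧ x = 3 ∧ y = 4 ∧ z = 12) ∨ (w = 3 ∧ x = 3 ∧ y = 6 ∧ z = 6) ∨
    (w = 3 ∧ x = 4 ∧ y = 4 ∧ z = 6) ∨ (w = 4 ∧ x = 4 ∧ y = 4 ∧ z = 4) := by
  have hx : 3 ≤ x := le_trans hw hwx
  have hy : 3 ≤ y := le_trans hx hxy
  have hz : 3 ≤ z := le_trans hy hyz
  have c1 : w*y*z ≤ x*y*z := Nat.mul_le_mul (Nat.mul_le_mul hwx le_rfl) le_rfl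
  have c2 : w*x*z ≤ x*y*z := Nat.mul_le_mul (Nat.mul_le_mul hwx hxy) le_rfl
  have c3 : w*x*y ≤ x*y*z := Nat.mul_le_mul (Nat.mul_le_mul hwx hxy) hyz
  have hpos : 0 < x*y*z := Nat.mul_pos (Nat.mul_pos (by omega) (by omega)) (by omega)
  have hcw : (x*y*z)*w ≤ (x*y*z)*4 := by nlinarith [key, c1, c2, c3]
  have hw4 : w ≤ 4 := Nat.le_of_mul_le_mul_left hcw hpos
  have d1 : w*x*z ≤ w*y*z := Nat.mul_le_mul (Nat.mul_le_mul le_rfl hxy) le_rfl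
  have d2 : w*x*y ≤ w*y*z := Nat.mul_le_mul (Nat.mul_le_mul le_rfl hxy) hyz
  have hposyz : 0 < y*z := Nat.mul_pos (by omega) (by omega)
  have hcx : (y*z)*(w*x) ≤ (y*z)*(x + 3*w) := by nlinarith [key, d1, d2]
  have hwx4 : w*x ≤ x + 3*w := Nat.le_of_mul_le_mul_left hcx hposyz
  have hx4 : x ≤ 4 := by
    by_contra hc
    have h5 : 5 ≤ x := by omega
    have p1 : 5*w ≤ x*w := Nat.mul_le_mul h5 le_rfl
    have p2 : 3*x ≤ w*x := Nat.mul_le_mul hw le_rfl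
    nlinarith [hwx4, p1, p2]
  have e1 : w*x*y ≤ w*x*z := Nat.mul_le_mul le_rfl hyz
  have hposz : 0 < z := by omega
  have hcy : (w*x*y)*z ≤ (x*y + w*y + 2*(w*x))*z := by nlinarith [key, e1]
  have hq : w*x*y ≤ x*y + w*y + 2*(w*x) := Nat.le_of_mul_le_mul_right hcy hposz
  have hy8 : y ≤ 8 := by
    by_contra hc
    have h9 : 9 ≤ y := by omega
    have p1 : 3*(x*y) ≤ w*(x*y) := Nat.mul_le_mul hw le_rfl
    have p2 : w*y ≤ x*y := Nat.mul_le_mul hwx le_rfl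
    have p3 : x*9 ≤ x*y := Nat.mul_le_mul le_rfl h9
    have p4 : w*x ≤ 4*x := Nat.mul_le_mul hw4 le_rfl
    nlinarith [hq, p1, p2, p3, p4]
  clear c1 c2 c3 hcw d1 d2 hcx hwx4 e1 hcy hq hpos hposyz hposz
  interval_cases w <;> interval_cases x <;> interval_cases y <;> omega

private lemma sol5 (v w x y z : ℕ) (hv : 3 ≤ v) (hvw : v ≤ w) (hwx : w ≤ x)
    (hxy : x ≤ y) (hyz : y ≤ z)
    (key : 2*(w*x*y*z + v*x*y*z + v*w*y*z + v*w*x*z + v*w*x*y) = 3*(v*w*x*y*z)) :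
    (v = 3 ∧ w = 3 ∧ x = 3 ∧ y = 3 ∧ z = 6) ∨
    (v = 3 ∧ w = 3 ∧ x = 3 ∧ y = 4 ∧ z = 4) := by
  have hw : 3 ≤ w := le_trans hv hvw
  have hx : 3 ≤ x := le_trans hw hwx
  have hy : 3 ≤ y := le_trans hx hxy
  have hz : 3 ≤ z := le_trans hy hyz
  have c1 : v*x*y*z ≤ w*x*y*z :=
    Nat.mul_le_mul (Nat.mul_le_mul (Nat.mul_le_mul hvw le_rfl) le_rfl) le_rfl
  have c2 : v*w*y*z ≤ w*x*y*z :=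
    Nat.mul_le_mul (Nat.mul_le_mul (Nat.mul_le_mul hvw hwx) le_rfl) le_rfl
  have c3 : v*w*x*z ≤ w*x*y*z :=
    Nat.mul_le_mul (Nat.mul_le_mul (Nat.mul_le_mul hvw hwx) hxy) le_rfl
  have c4 : v*w*x*y ≤ w*x*y*z :=
    Nat.mul_le_mul (Nat.mul_le_mul (Nat.mul_le_mul hvw hwx) hxy) hyz
  have hposw : 0 < w*x*y*z :=
    Nat.mul_pos (Nat.mul_pos (Nat.mul_pos (by omega) (by omega)) (by omega)) (by omega)
  have hcv : (w*x*y*z)*(3*v) ≤ (w*x*y*z)*10 := by nlinarith [key, c1, c2, c3, c4]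
  have hv3 : v = 3 := by
    have := Nat.le_of_mul_le_mul_left hcv hposw
    omega
  subst hv3
  have d1 : w*y*z ≤ x*y*z := Nat.mul_le_mul (Nat.mul_le_mul hwx le_rfl) le_rfl
  have d2 : w*x*z ≤ x*y*z := Nat.mul_le_mul (Nat.mul_le_mul hwx hxy) le_rfl
  have d3 : w*x*y ≤ x*y*z := Nat.mul_le_mul (Nat.mul_le_mul hwx hxy) hyz
  have hposx : 0 < x*y*z := Nat.mul_pos (Nat.mul_pos (by omega) (by omega)) (by omega)
  have hcw : (x*y*z)*(7*w) ≤ (x*y*z)*24 := by nlinarith [key, d1, d2, d3]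
  have hw3 : w = 3 := by
    have := Nat.le_of_mul_le_mul_left hcw hposx
    omega
  subst hw3
  have e1 : x*z ≤ y*z := Nat.mul_le_mul hxy le_rfl
  have e2 : x*y ≤ y*z := Nat.mul_le_mul hxy hyz
  have hposyz : 0 < y*z := Nat.mul_pos (by omega) (by omega)
  have hcx : (y*z)*(15*x) ≤ (y*z)*54 := by nlinarith [key, e1, e2]
  have hx3 : x = 3 := by
    have := Nat.le_of_mul_le_mul_left hcx hposyz
    omega
  subst hx3
  have hposz : 0 < z := by omega
  have hcy : z*(27*y) ≤ z*108 := by nlinarith [key, hyz]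
  have hy4 : y ≤ 4 := by
    have := Nat.le_of_mul_le_mul_left hcy hposz
    omega
  clear c1 c2 c3 c4 hcv d1 d2 d3 hcw e1 e2 hcx hcy hposw hposx hposyz hposz
  interval_cases y <;> omega

/-- Arithmetic classification of the possible combinatorial types of vertex coronae
in a monocoronal face-to-face planar tiling: the solutions in integers `a i ≥ 3` of
`∑ 1 / a i = n / 2 - 1`. -/
theorem vertex_corona_equation_solutions (n : ℕ) (hn : 1 ≤ n) (a : Fin n → ℕ)
    (ha3 : ∀ i, 3 ≤ a i) (hmono : Monotone a) :
    (∑ i : Fin n, (1 : ℚ) / (a i : ℚ) = (n : ℚ) / 2 - 1) ↔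
      (List.ofFn a = [3, 7, 42] ∨ List.ofFn a = [3, 8, 24] ∨
       List.ofFn a = [3, 9, 18] ∨ List.ofFn a = [3, 10, 15] ∨
       List.ofFn a = [3, 12, 12] ∨ List.ofFn a = [4, 5, 20] ∨
       List.ofFn a = [4, 6, 12] ∨ List.ofFn a = [4, 8, 8] ∨
       List.ofFn a = [5, 5, 10] ∨ List.ofFn a = [6, 6, 6] ∨
       List.ofFn a = [3, 3, 4, 12] ∨ List.ofFn a = [3, 3, 6, 6] ∨
       List.ofFn a = [3, 4, 4, 6] ∨ List.ofFn a = [4, 4, 4, 4] ∨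
       List.ofFn a = [3, 3, 3, 3, 6] ∨ List.ofFn a = [3, 3, 3, 4, 4] ∨
       List.ofFn a = [3, 3, 3, 3, 3, 3]) := by
  have hpos : ∀ i, 0 < a i := fun i => by have := ha3 i; omega
  have hne : ∀ i : Fin n, ((a i : ℚ)) ≠ 0 := fun i => by
    have := hpos i
    exact_mod_cast this.ne'
  constructor
  · intro h
    have hub : (∑ i : Fin n, (1:ℚ)/(a i)) ≤ (n:ℚ)/3 := by
      have hb : ∀ i ∈ Finset.univ, (1:ℚ)/(a i) ≤ 1/3 := by
        intro i _
        apply one_div_le_one_div_of_le (by norm_num)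
        exact_mod_cast ha3 i
      calc (∑ i : Fin n, (1:ℚ)/(a i)) ≤ ∑ _i : Fin n, (1:ℚ)/3 := Finset.sum_le_sum hb
        _ = (n:ℚ)/3 := by
            rw [Finset.sum_const, Finset.card_univ, Fintype.card_fin, nsmul_eq_mul]
            ring
    have hlb : 0 < ∑ i : Fin n, (1:ℚ)/(a i) := by
      apply Finset.sum_pos
      · intro i _
        apply div_pos one_pos
        exact_mod_cast hpos i
      · exact ⟨⟨0, hn⟩, Finset.mem_univ _⟩
    rw [h] at hub hlb
    have hn3 : 3 ≤ n := by
      have h2 : (2:ℚ) < (n:ℚ) := by linarith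
      have : (2:ℕ) < n := by exact_mod_cast h2
      omega
    have hn6 : n ≤ 6 := by
      have h6 : (n:ℚ) ≤ 6 := by linarith
      exact_mod_cast h6
    clear hub hlb
    interval_cases n
    · -- n = 3
      rw [Fin.sum_univ_three] at h
      have key' : 2*((a 1 : ℚ)*(a 2)) + 2*((a 0 : ℚ)*(a 2)) + 2*((a 0 : ℚ)*(a 1))
          = (a 0 : ℚ)*(a 1)*(a 2) := by
        have h0 := hne 0; have h1 := hne 1; have h2 := hne 2
        field_simp at h
        norm_num at h
        linarith
      have key : 2*(a 1*a 2) + 2*(a 0*a 2) + 2*(a 0*a 1) = a 0*a 1*a 2 := by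
        exact_mod_cast key'
      have h01 : a 0 ≤ a 1 := hmono (by decide : (0:Fin 3) ≤ 1)
      have h12 : a 1 ≤ a 2 := hmono (by decide : (1:Fin 3) ≤ 2)
      rcases sol3 (a 0) (a 1) (a 2) (ha3 0) h01 h12 key with
        h'|h'|h'|h'|h'|h'|h'|h'|h'|h' <;>
      · obtain ⟨e0, e1, e2⟩ := h'
        simp [List.ofFn_succ, e0, e1, e2]
    · -- n = 4
      rw [Fin.sum_univ_four] at h
      have key' : (a 1 : ℚ)*(a 2)*(a 3) + (a 0 : ℚ)*(a 2)*(a 3) + (a 0 : ℚ)*(a 1)*(a 3)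
          + (a 0 : ℚ)*(a 1)*(a 2) = (a 0 : ℚ)*(a 1)*(a 2)*(a 3) := by
        have h0 := hne 0; have h1 := hne 1; have h2 := hne 2; have h3 := hne 3
        field_simp at h
        norm_num at h
        linarith
      have key : a 1*a 2*a 3 + a 0*a 2*a 3 + a 0*a 1*a 3 + a 0*a 1*a 2
          = a 0*a 1*a 2*a 3 := by exact_mod_cast key'
      have h01 : a 0 ≤ a 1 := hmono (by decide : (0:Fin 4) ≤ 1)
      have h12 : a 1 ≤ a 2 := hmono (by decide : (1:Fin 4) ≤ 2)
      have h23 : a 2 ≤ a 3 := hmono (by decide : (2:Fin 4) ≤ 3)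
      rcases sol4 (a 0) (a 1) (a 2) (a 3) (ha3 0) h01 h12 h23 key with
        h'|h'|h'|h' <;>
      · obtain ⟨e0, e1, e2, e3⟩ := h'
        simp [List.ofFn_succ, show (Fin.succ 2 : Fin 4) = 3 by decide, e0, e1, e2, e3]
    · -- n = 5
      rw [Fin.sum_univ_five] at h
      have key' : 2*((a 1 : ℚ)*(a 2)*(a 3)*(a 4) + (a 0 : ℚ)*(a 2)*(a 3)*(a 4)
          + (a 0 : ℚ)*(a 1)*(a 3)*(a 4) + (a 0 : ℚ)*(a 1)*(a 2)*(a 4)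
          + (a 0 : ℚ)*(a 1)*(a 2)*(a 3))
          = 3*((a 0 : ℚ)*(a 1)*(a 2)*(a 3)*(a 4)) := by
        have h0 := hne 0; have h1 := hne 1; have h2 := hne 2
        have h3 := hne 3; have h4 := hne 4
        field_simp at h
        norm_num at h
        linarith
      have key : 2*(a 1*a 2*a 3*a 4 + a 0*a 2*a 3*a 4 + a 0*a 1*a 3*a 4
          + a 0*a 1*a 2*a 4 + a 0*a 1*a 2*a 3) = 3*(a 0*a 1*a 2*a 3*a 4) := by
        exact_mod_cast key'
      have h01 : a 0 ≤ a 1 := hmono (by decide : (0:Fin 5) ≤ 1)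
      have h12 : a 1 ≤ a 2 := hmono (by decide : (1:Fin 5) ≤ 2)
      have h23 : a 2 ≤ a 3 := hmono (by decide : (2:Fin 5) ≤ 3)
      have h34 : a 3 ≤ a 4 := hmono (by decide : (3:Fin 5) ≤ 4)
      rcases sol5 (a 0) (a 1) (a 2) (a 3) (a 4) (ha3 0) h01 h12 h23 h34 key with
        h'|h' <;>
      · obtain ⟨e0, e1, e2, e3, e4⟩ := h'
        simp [List.ofFn_succ, show (Fin.succ 2 : Fin 5) = 3 by decide,
          show ((Fin.succ 2).succ : Fin 5) = 4 by decide, e0, e1, e2, e3, e4]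
    · -- n = 6
      have hle : ∀ i ∈ Finset.univ, (1:ℚ)/(a i) ≤ 1/3 := by
        intro i _
        apply one_div_le_one_div_of_le (by norm_num)
        exact_mod_cast ha3 i
      have hsum : (∑ i : Fin 6, (1:ℚ)/(a i)) = ∑ _i : Fin 6, (1:ℚ)/3 := by
        rw [h, Finset.sum_const, Finset.card_univ, Fintype.card_fin, nsmul_eq_mul]
        norm_num
      have hall := (Finset.sum_eq_sum_iff_of_le hle).mp hsum
      have hv : ∀ i : Fin 6, a i = 3 := by
        intro i
        have h1 := hall i (Finset.mem_univ i)
        have h2 : ((a i : ℚ)) = 3 := by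
          rw [div_eq_div_iff (hne i) (by norm_num)] at h1
          linarith
        exact_mod_cast h2
      simp [List.ofFn_succ, hv]
  · intro hor
    rcases hor with hL|hL|hL|hL|hL|hL|hL|hL|hL|hL|hL|hL|hL|hL|hL|hL|hL <;>
    · have hlen := congrArg List.length hL
      simp at hlen
      subst hlen
      simp [List.ofFn_succ] at hL
      norm_num [Fin.sum_univ_three, Fin.sum_univ_four, Fin.sum_univ_five, Fin.sum_univ_six, hL]
end

section
/- Let n ≥ 1 and let a_1 ≤ a_2 ≤ … ≤ a_n be natural numbers with each a_i ≥ 3. Then ∑_{i=1}^{n} 1/a_i = (n − 1)/2 (as rationals) holds if and only if the tuple (a_1, …, a_n) is one of the following three tuples: (3,6), (4,4), (3,3,3). -/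
/-- Arithmetic classification of the possible combinatorial types of vertex coronae
in a monocoronal non-face-to-face planar tiling: the solutions in integers `a i ≥ 3`
of `∑ 1 / a i = (n - 1) / 2`. -/
theorem vertex_corona_equation_solutions_nonFaceToFace (n : ℕ) (hn : 1 ≤ n)
    (a : Fin n → ℕ) (ha3 : ∀ i, 3 ≤ a i) (hmono : Monotone a) :
    (∑ i : Fin n, (1 : ℚ) / (a i : ℚ) = ((n : ℚ) - 1) / 2) ↔
      (List.ofFn a = [3, 6] ∨ List.ofFn a = [4, 4] ∨ List.ofFn a = [3, 3, 3]) := by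
  have hpos : ∀ i, (0 : ℚ) < (a i : ℚ) := fun i => by
    exact_mod_cast lt_of_lt_of_le (by norm_num) (ha3 i)
  have hterm : ∀ i : Fin n, (1 : ℚ) / (a i : ℚ) ≤ 1 / 3 := fun i => by
    apply one_div_le_one_div_of_le (by norm_num)
    exact_mod_cast ha3 i
  constructor
  · intro hsum
    -- bound n ≤ 3
    have hub : ((n : ℚ) - 1) / 2 ≤ n * (1 / 3) := by
      rw [← hsum]
      calc ∑ i : Fin n, (1 : ℚ) / (a i : ℚ) ≤ ∑ _i : Fin n, (1 : ℚ) / 3 :=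
            Finset.sum_le_sum fun i _ => hterm i
        _ = n * (1 / 3) := by simp [Finset.sum_const, mul_comm]
    have hn3 : n ≤ 3 := by
      by_contra h
      push_neg at h
      have : (4 : ℚ) ≤ n := by exact_mod_cast h
      nlinarith
    interval_cases n
    · -- n = 1 : impossible
      exfalso
      rw [Fin.sum_univ_one] at hsum
      have := hpos 0
      have : (0 : ℚ) < 1 / (a 0 : ℚ) := by positivity
      rw [hsum] at this
      norm_num at this
    · -- n = 2
      rw [Fin.sum_univ_two] at hsum
      push_cast at hsum
      have h01 : a 0 ≤ a 1 := hmono (by norm_num : (0 : Fin 2) ≤ 1)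
      have h01q : (1 : ℚ) / (a 1 : ℚ) ≤ 1 / (a 0 : ℚ) :=
        one_div_le_one_div_of_le (hpos 0) (by exact_mod_cast h01)
      have ha0le : a 0 ≤ 4 := by
        by_contra h
        push_neg at h
        have : (5 : ℚ) ≤ (a 0 : ℚ) := by exact_mod_cast h
        have h0 : (1 : ℚ) / (a 0 : ℚ) ≤ 1 / 5 := one_div_le_one_div_of_le (by norm_num) this
        nlinarith
      have ha0 := ha3 0
      have h1 := hpos 1
      have h1' : ((a 1 : ℚ)) ≠ 0 := ne_of_gt h1
      interval_cases h : (a 0)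
      · -- a 0 = 3, so a 1 = 6
        left
        have : (a 1 : ℚ) = 6 := by
          push_cast at hsum
          field_simp at hsum
          linarith
        have ha1 : a 1 = 6 := by exact_mod_cast this
        simp [List.ofFn_succ, h, ha1]
      · right; left
        have : (a 1 : ℚ) = 4 := by
          push_cast at hsum
          field_simp at hsum ⊢
          linarith
        have ha1 : a 1 = 4 := by exact_mod_cast this
        simp [List.ofFn_succ, h, ha1]
    · -- n = 3
      right; right
      rw [Fin.sum_univ_three] at hsum
      push_cast at hsum
      have h01 : a 0 ≤ a 1 := hmono (by decide : (0 : Fin 3) ≤ 1)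
      have h12 : a 1 ≤ a 2 := hmono (by decide : (1 : Fin 3) ≤ 2)
      have h01q : (1 : ℚ) / (a 1 : ℚ) ≤ 1 / (a 0 : ℚ) :=
        one_div_le_one_div_of_le (hpos 0) (by exact_mod_cast h01)
      have h12q : (1 : ℚ) / (a 2 : ℚ) ≤ 1 / (a 1 : ℚ) :=
        one_div_le_one_div_of_le (hpos 1) (by exact_mod_cast h12)
      have ht0 := hterm 0
      have ht1 := hterm 1
      have ht2 := hterm 2
      have e0 : (1 : ℚ) / (a 0 : ℚ) = 1 / 3 := by linarith
      have e1 : (1 : ℚ) / (a 1 : ℚ) = 1 / 3 := by linarith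
      have e2 : (1 : ℚ) / (a 2 : ℚ) = 1 / 3 := by linarith
      have p0 := hpos 0; have p1 := hpos 1; have p2 := hpos 2
      have a0 : a 0 = 3 := by
        have : (a 0 : ℚ) = 3 := by field_simp at e0; linarith
        exact_mod_cast this
      have a1 : a 1 = 3 := by
        have : (a 1 : ℚ) = 3 := by field_simp at e1; linarith
        exact_mod_cast this
      have a2 : a 2 = 3 := by
        have : (a 2 : ℚ) = 3 := by field_simp at e2; linarith
        exact_mod_cast this
      simp [List.ofFn_succ, a0, a1, a2]
  · intro h
    rcases h with h | h | h
    · have hlen : n = 2 := by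
        have := congrArg List.length h
        simpa using this
      subst hlen
      have h' : [a 0, a 1] = [3, 6] := by
        rw [← h]; simp [List.ofFn_succ]
      simp only [List.cons.injEq] at h'
      obtain ⟨h0, h1, -⟩ := h'
      rw [Fin.sum_univ_two, h0, h1]
      norm_num
    · have hlen : n = 2 := by
        have := congrArg List.length h
        simpa using this
      subst hlen
      have h' : [a 0, a 1] = [4, 4] := by
        rw [← h]; simp [List.ofFn_succ]
      simp only [List.cons.injEq] at h'
      obtain ⟨h0, h1, -⟩ := h'
      rw [Fin.sum_univ_two, h0, h1]
      norm_num
    · have hlen : n = 3 := by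
        have := congrArg List.length h
        simpa using this
      subst hlen
      have h' : [a 0, a 1, a 2] = [3, 3, 3] := by
        rw [← h]; simp [List.ofFn_succ]
      simp only [List.cons.injEq] at h'
      obtain ⟨h0, h1, h2, -⟩ := h'
      rw [Fin.sum_univ_three, h0, h1, h2]
      norm_num
end

section
/- For every dimension d ≥ 2 there exists a face-to-face tiling of d-dimensional Euclidean space by convex polytopes that is monocoronal up to rigid motions and is exactly ⌈(d+1)/2⌉-periodic: the set of vectors v such that translation by v is a symmetry of the tiling spans a real subspace of dimension exactly ⌈(d+1)/2⌉. -/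
noncomputable section

open Set

abbrev Ed (d : ℕ) := EuclideanSpace ℝ (Fin d)

variable (d : ℕ)

/-- A convex polytope: a compact convex subset with nonempty interior and finitely
many extreme points. -/
def IsConvexPolytope (P : Set (Ed d)) : Prop :=
  IsCompact P ∧ Convex ℝ P ∧ (interior P).Nonempty ∧ (Set.extremePoints ℝ P).Finite

/-- A tiling of `ℝ^d` by convex polytopes. -/
def IsTiling (T : Set (Set (Ed d))) : Prop :=
  T.Countable ∧ (∀ P ∈ T, IsConvexPolytope d P) ∧ (⋃₀ T = Set.univ) ∧
    T.Pairwise fun P Q => Disjoint (interior P) (interior Q)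

/-- A vertex of a tiling: an extreme point of at least one tile. -/
def IsVertex (T : Set (Set (Ed d))) (x : Ed d) : Prop :=
  ∃ P ∈ T, x ∈ Set.extremePoints ℝ P

/-- An isometry is orientation preserving if its linear part has determinant `1`. -/
def OrientationPreserving (f : Ed d ≃ᵃⁱ[ℝ] Ed d) : Prop :=
  LinearMap.det (f.linearIsometryEquiv.toLinearEquiv : Ed d →ₗ[ℝ] Ed d) = 1

/-- Monocoronal up to congruence: any two vertex coronae are congruent. -/
def MonocoronalC (T : Set (Set (Ed d))) : Prop :=
  ∀ x y : Ed d, IsVertex d T x → IsVertex d T y →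
    ∃ f : Ed d ≃ᵃⁱ[ℝ] Ed d, f x = y ∧
      (fun P => f '' P) '' {P | P ∈ T ∧ x ∈ P} = {P | P ∈ T ∧ y ∈ P}

/-- Monocoronal up to rigid motions: any two vertex coronae are directly congruent. -/
def MonocoronalRM (T : Set (Set (Ed d))) : Prop :=
  ∀ x y : Ed d, IsVertex d T x → IsVertex d T y →
    ∃ f : Ed d ≃ᵃⁱ[ℝ] Ed d, OrientationPreserving d f ∧ f x = y ∧
      (fun P => f '' P) '' {P | P ∈ T ∧ x ∈ P} = {P | P ∈ T ∧ y ∈ P}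

/-- A tiling is face-to-face if the intersection of any two distinct tiles is an
extreme subset of each of them. -/
def FaceToFace (T : Set (Set (Ed d))) : Prop :=
  ∀ P ∈ T, ∀ Q ∈ T, P ≠ Q → IsExtreme ℝ P (P ∩ Q) ∧ IsExtreme ℝ Q (P ∩ Q)

/-- A symmetry of a tiling: an isometry mapping the set of tiles onto itself. -/
def IsSymmetry (T : Set (Set (Ed d))) (f : Ed d ≃ᵃⁱ[ℝ] Ed d) : Prop :=
  (fun P => f '' P) '' T = T

/-- The set of translation vectors of a tiling. -/
def periodVectors (T : Set (Set (Ed d))) : Set (Ed d) :=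
  {v | IsSymmetry d T (AffineIsometryEquiv.constVAdd ℝ (Ed d) v)}

namespace MC

instance edCoe {n : ℕ} : Coe (Fin n → ℝ) (Ed n) := ⟨WithLp.toLp 2⟩

/-! ### Integer combinatorics -/

def ff (n : ℤ) : ℤ := if 0 ≤ n then ((n.toNat / 2 : ℕ) : ℤ) else (((1 - n).toNat / 2 : ℕ) : ℤ)
def ee (n : ℤ) : ℤ := ff (n + 1) - ff n

lemma ff_rec (n : ℤ) : ff (n + 1) = ff n + ee n := by unfold ee; ring

lemma ee_even {n : ℤ} (h : Even n) : ee n = 0 := by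
  obtain ⟨m, rfl⟩ := h; unfold ee ff; split_ifs <;> omega

lemma ee_odd_nonneg {n : ℤ} (h : Odd n) (h2 : 0 ≤ n) : ee n = 1 := by
  obtain ⟨m, rfl⟩ := h; unfold ee ff; split_ifs <;> omega

lemma ee_odd_neg {n : ℤ} (h : Odd n) (h2 : n < 0) : ee n = -1 := by
  obtain ⟨m, rfl⟩ := h; unfold ee ff; split_ifs <;> omega

lemma ee_odd {n : ℤ} (h : Odd n) : ee n = 1 ∨ ee n = -1 := by
  rcases le_or_gt 0 n with h2 | h2
  · exact Or.inl (ee_odd_nonneg h h2)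
  · exact Or.inr (ee_odd_neg h h2)

lemma ee_sq {n : ℤ} (h : Odd n) : ee n * ee n = 1 := by
  rcases ee_odd h with h' | h' <;> rw [h'] <;> ring

lemma ee_aperiodic {V : ℤ} (h : V ≠ 0) : ∃ n : ℤ, ee (n + V) ≠ ee n := by
  rcases Int.even_or_odd V with hV | hV
  · obtain ⟨m, rfl⟩ := hV
    rcases lt_or_gt_of_ne h with hneg | hpos
    · refine ⟨1, ?_⟩
      have h1 : ee (1 + (m + m)) = -1 := ee_odd_neg ⟨m, by ring⟩ (by omega)
      have h2 : ee 1 = 1 := ee_odd_nonneg ⟨0, by norm_num⟩ (by norm_num)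
      rw [h1, h2]; norm_num
    · refine ⟨-1, ?_⟩
      have h1 : ee (-1 + (m + m)) = 1 := ee_odd_nonneg ⟨m - 1, by ring⟩ (by omega)
      have h2 : ee (-1) = -1 := ee_odd_neg ⟨-1, by norm_num⟩ (by norm_num)
      rw [h1, h2]; norm_num
  · refine ⟨1, ?_⟩
    have h1 : ee (1 + V) = 0 := by
      apply ee_even; obtain ⟨m, rfl⟩ := hV; exact ⟨m + 1, by ring⟩
    have h2 : ee 1 = 1 := ee_odd_nonneg ⟨0, by norm_num⟩ (by norm_num)
    rw [h1, h2]; norm_num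

/-! ### Index bookkeeping -/

def jd (d : ℕ) : ℕ := d - (d + 2) / 2

lemma jd_bound {d : ℕ} (hd : 2 ≤ d) : 2 * jd d + 1 ≤ d := by unfold jd; omega

variable {d}

def isZ (c : Fin d) : Prop := (c : ℕ) < jd d
def isS (c : Fin d) : Prop := jd d ≤ (c : ℕ) ∧ (c : ℕ) < 2 * jd d

instance : DecidablePred (isZ (d := d)) := fun c => Nat.decLt _ _
instance : DecidablePred (isS (d := d)) := fun c => instDecidableAnd

def zo (c : Fin d) : Fin d := ⟨(c : ℕ) - jd d, lt_of_le_of_lt (Nat.sub_le _ _) c.isLt⟩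

lemma isZ_zo {c : Fin d} (h : isS c) : isZ (zo c) := by
  rcases h with ⟨h1, h2⟩; simp only [isZ, zo]; omega

lemma not_isS_zo {c : Fin d} (h : isS c) : ¬ isS (zo c) := by
  rcases h with ⟨h1, h2⟩; simp only [isS, zo]; omega

lemma not_isZ_of_isS {c : Fin d} (h : isS c) : ¬ isZ c := by
  rcases h with ⟨h1, h2⟩; simp only [isZ]; omega

/-! ### The tiles -/

def sh (k : Fin d → ℤ) (q : Ed d) (c : Fin d) : ℝ :=
  if isS c then (ff (k (zo c)) : ℝ) + (q (zo c) - (k (zo c) : ℝ)) * (ee (k (zo c)) : ℝ) else 0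

def An (k : Fin d → ℤ) (q : Ed d) : Ed d := fun c => q c + sh k q c
def Bn (k : Fin d → ℤ) (p : Ed d) : Ed d := fun c => p c - sh k p c

lemma sh_congr {k k' : Fin d → ℤ} {q q' : Ed d}
    (hk : ∀ i, isZ i → k i = k' i) (hq : ∀ i, isZ i → q i = q' i) (c : Fin d) :
    sh k q c = sh k' q' c := by
  unfold sh
  split_ifs with h
  · rw [hk _ (isZ_zo h), hq _ (isZ_zo h)]
  · rfl

lemma An_apply_z {k : Fin d → ℤ} {q : Ed d} {i : Fin d} (h : ¬ isS i) : An k q i = q i := by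
  simp [An, sh, h]

lemma Bn_apply_z {k : Fin d → ℤ} {p : Ed d} {i : Fin d} (h : ¬ isS i) : Bn k p i = p i := by
  simp [Bn, sh, h]

lemma Bn_An (k : Fin d → ℤ) (q : Ed d) : Bn k (An k q) = q := by
  ext c
  have : sh k (An k q) c = sh k q c :=
    sh_congr (fun _ _ => rfl) (fun i hi => An_apply_z (fun hS => (not_isZ_of_isS hS) hi)) c
  rw [show (Bn k (An k q)) c = An k q c - sh k (An k q) c from rfl, this]; simp [An]

lemma An_Bn (k : Fin d → ℤ) (p : Ed d) : An k (Bn k p) = p := by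
  ext c
  have : sh k (Bn k p) c = sh k p c :=
    sh_congr (fun _ _ => rfl) (fun i hi => Bn_apply_z (fun hS => (not_isZ_of_isS hS) hi)) c
  rw [show (An k (Bn k p)) c = Bn k p c + sh k (Bn k p) c from rfl, this]; simp [Bn]

def cube (k : Fin d → ℤ) : Set (Ed d) := {q | ∀ c, (k c : ℝ) ≤ q c ∧ q c ≤ (k c : ℝ) + 1}
def ocube (k : Fin d → ℤ) : Set (Ed d) := {q | ∀ c, (k c : ℝ) < q c ∧ q c < (k c : ℝ) + 1}
def Tile (k : Fin d → ℤ) : Set (Ed d) := {p | Bn k p ∈ cube k}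

def TT (d : ℕ) : Set (Set (Ed d)) := Set.range (Tile (d := d))

lemma An_mem_Tile {k : Fin d → ℤ} {q : Ed d} (h : q ∈ cube k) : An k q ∈ Tile k := by
  simp only [Tile, mem_setOf_eq, Bn_An]; exact h

lemma An_image_cube (k : Fin d → ℤ) : An k '' cube k = Tile k := by
  ext p
  constructor
  · rintro ⟨q, hq, rfl⟩; exact An_mem_Tile hq
  · intro hp; exact ⟨Bn k p, hp, An_Bn k p⟩

lemma smul_apply' (a : ℝ) (p : Ed d) (c : Fin d) : (a • p) c = a * p c := rfl
lemma add_apply' (p q : Ed d) (c : Fin d) : (p + q) c = p c + q c := rfl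
lemma sub_apply' (p q : Ed d) (c : Fin d) : (p - q) c = p c - q c := rfl

lemma sh_combo (k : Fin d → ℤ) (p q : Ed d) {a b : ℝ} (hab : a + b = 1) (c : Fin d) :
    sh k (a • p + b • q) c = a * sh k p c + b * sh k q c := by
  unfold sh
  split_ifs with h
  · have : (a • p + b • q) (zo c) = a * p (zo c) + b * q (zo c) := rfl
    rw [this]
    have hb : b = 1 - a := by linarith
    subst hb; ring
  · ring

lemma An_combo (k : Fin d → ℤ) (p q : Ed d) {a b : ℝ} (hab : a + b = 1) :
    An k (a • p + b • q) = a • An k p + b • An k q := by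
  ext c
  have h1 : (a • An k p + b • An k q) c = a * An k p c + b * An k q c := rfl
  have h2 : (a • p + b • q) c = a * p c + b * q c := rfl
  rw [h1]; simp only [An, h2, sh_combo k p q hab c]; ring

lemma Bn_combo (k : Fin d → ℤ) (p q : Ed d) {a b : ℝ} (hab : a + b = 1) :
    Bn k (a • p + b • q) = a • Bn k p + b • Bn k q := by
  ext c
  have h1 : (a • Bn k p + b • Bn k q) c = a * Bn k p c + b * Bn k q c := rfl
  have h2 : (a • p + b • q) c = a * p c + b * q c := rfl
  rw [h1]; simp only [Bn, h2, sh_combo k p q hab c]; ring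

lemma continuous_apply' (c : Fin d) : Continuous fun p : Ed d => p c :=
  (continuous_apply c).comp (PiLp.continuous_ofLp (p := 2) (β := fun _ : Fin d => ℝ))

lemma continuous_sh (k : Fin d → ℤ) (c : Fin d) : Continuous fun p : Ed d => sh k p c := by
  unfold sh
  split_ifs with h
  · exact continuous_const.add
      (((continuous_apply' (zo c)).sub continuous_const).mul continuous_const)
  · exact continuous_const

lemma continuous_An (k : Fin d → ℤ) : Continuous (An k) := by
  have h : ∀ c, Continuous fun p : Ed d => An k p c :=
    fun c => (continuous_apply' c).add (continuous_sh k c)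
  exact (PiLp.continuous_toLp (p := 2) (β := fun _ : Fin d => ℝ)).comp (continuous_pi h)

lemma continuous_Bn_coord (k : Fin d → ℤ) (c : Fin d) : Continuous fun p : Ed d => Bn k p c :=
  (continuous_apply' c).sub (continuous_sh k c)

/-! ### Tiling properties -/

lemma not_isS_of_isZ {c : Fin d} (h : isZ c) : ¬ isS c := by
  simp only [isZ] at h; simp only [isS]; omega

lemma isCompact_cube (k : Fin d → ℤ) : IsCompact (cube k) := by
  have : cube k = (EuclideanSpace.equiv (Fin d) ℝ).toHomeomorph ⁻¹'
      (Set.univ.pi fun c => Icc (k c : ℝ) ((k c : ℝ) + 1)) := by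
    ext q
    simp only [cube, mem_setOf_eq, mem_preimage, mem_pi, mem_univ, forall_true_left, mem_Icc]
    rfl
  rw [this]
  exact (Homeomorph.isCompact_preimage _).2 (isCompact_univ_pi fun c => isCompact_Icc)

lemma isCompact_Tile (k : Fin d → ℤ) : IsCompact (Tile k) := by
  rw [← An_image_cube]
  exact (isCompact_cube k).image (continuous_An k)

lemma combo_bounds {a b x y lo hi : ℝ} (ha : 0 ≤ a) (hb : 0 ≤ b) (hab : a + b = 1)
    (hx1 : lo ≤ x) (hx2 : x ≤ hi) (hy1 : lo ≤ y) (hy2 : y ≤ hi) :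
    lo ≤ a * x + b * y ∧ a * x + b * y ≤ hi := by
  have e1 : a * lo + b * lo = lo := by rw [← add_mul, hab, one_mul]
  have e2 : a * hi + b * hi = hi := by rw [← add_mul, hab, one_mul]
  constructor
  · have h := add_le_add (mul_le_mul_of_nonneg_left hx1 ha) (mul_le_mul_of_nonneg_left hy1 hb)
    linarith
  · have h := add_le_add (mul_le_mul_of_nonneg_left hx2 ha) (mul_le_mul_of_nonneg_left hy2 hb)
    linarith

lemma convex_Tile (k : Fin d → ℤ) : Convex ℝ (Tile k) := by
  intro p hp q hq a b ha hb hab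
  intro c
  have h := Bn_combo k p q hab
  have h2 : Bn k (a • p + b • q) c = a * Bn k p c + b * Bn k q c := by rw [h]; rfl
  rw [h2]
  exact combo_bounds ha hb hab (hp c).1 (hp c).2 (hq c).1 (hq c).2

def OT (k : Fin d → ℤ) : Set (Ed d) := {p | Bn k p ∈ ocube k}

lemma isOpen_OT (k : Fin d → ℤ) : IsOpen (OT k) := by
  have : OT k = ⋂ c : Fin d, (fun p => Bn k p c) ⁻¹' (Ioo (k c : ℝ) ((k c : ℝ) + 1)) := by
    ext p
    simp only [OT, ocube, mem_setOf_eq, mem_iInter, mem_preimage, mem_Ioo]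
  rw [this]
  exact isOpen_iInter_of_finite fun c => isOpen_Ioo.preimage (continuous_Bn_coord k c)

lemma OT_subset (k : Fin d → ℤ) : OT k ⊆ Tile k :=
  fun p hp c => ⟨le_of_lt (hp c).1, le_of_lt (hp c).2⟩

lemma OT_subset_interior (k : Fin d → ℤ) : OT k ⊆ interior (Tile k) :=
  interior_maximal (OT_subset k) (isOpen_OT k)

lemma interior_nonempty_Tile (k : Fin d → ℤ) : (interior (Tile k)).Nonempty := by
  refine ⟨An k (fun c => (k c : ℝ) + 1/2), OT_subset_interior k ?_⟩
  simp only [OT, mem_setOf_eq, Bn_An]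
  intro c
  constructor <;> simp <;> norm_num

lemma interior_subset_OT (k : Fin d → ℤ) : interior (Tile k) ⊆ OT k := by
  intro p hp
  have hpT : p ∈ Tile k := interior_subset hp
  set q := Bn k p with hq
  have hqc : q ∈ cube k := hpT
  intro c
  rcases Metric.mem_nhds_iff.1 (mem_interior_iff_mem_nhds.1 hp) with ⟨ε, hε, hball⟩
  -- the perturbation curve
  set sng : Ed d := WithLp.toLp 2 (fun c' => if c' = c then (1:ℝ) else 0) with hsng
  have hcurve : ∀ t : ℝ, ∃ δ > 0, ∀ s : ℝ, |s| < δ → An k (q + s • sng) ∈ Metric.ball p ε := by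
    intro t
    have hcont : Continuous fun s : ℝ => An k (q + s • sng) := by
      apply (continuous_An k).comp
      exact continuous_const.add (continuous_id.smul continuous_const)
    have h0 : An k (q + (0:ℝ) • sng) = p := by
      simp only [zero_smul, add_zero]
      rw [hq]; exact An_Bn k p
    have : (fun s : ℝ => An k (q + s • sng)) ⁻¹' Metric.ball p ε ∈ nhds (0:ℝ) := by
      apply hcont.continuousAt.preimage_mem_nhds
      rw [h0]
      exact Metric.ball_mem_nhds p hε
    rcases Metric.mem_nhds_iff.1 this with ⟨δ, hδ, hsub⟩
    exact ⟨δ, hδ, fun s hs => hsub (by simpa [Real.dist_eq] using hs)⟩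
  rcases hcurve 0 with ⟨δ, hδ, hmem⟩
  have key : ∀ s : ℝ, |s| < δ → q c + s ∈ Icc (k c : ℝ) ((k c : ℝ) + 1) := by
    intro s hs
    have h1 : An k (q + s • sng) ∈ Tile k := hball (hmem s hs)
    have h2 : Bn k (An k (q + s • sng)) = q + s • sng := Bn_An k _
    have h3 := (h1 c)
    rw [h2] at h3
    have h4 : (q + s • sng) c = q c + s := by
      have : (q + s • sng) c = q c + s * sng c := rfl
      rw [this, hsng]; simp
    rw [h4] at h3
    exact h3
  constructor
  · rcases lt_or_eq_of_le (hqc c).1 with h | h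
    · exact h
    · exfalso
      have := (key (-(δ/2)) (by rw [abs_neg, abs_of_pos (by linarith)]; linarith)).1
      rw [← h] at this; linarith
  · rcases lt_or_eq_of_le (hqc c).2 with h | h
    · exact h
    · exfalso
      have := (key (δ/2) (by rw [abs_of_pos (by linarith)]; linarith)).2
      rw [h] at this; linarith

lemma interior_Tile_disjoint {k k' : Fin d → ℤ} (hkk : k ≠ k') :
    Disjoint (interior (Tile k)) (interior (Tile k')) := by
  rw [Set.disjoint_left]
  intro p hp hp'
  have h1 : Bn k p ∈ ocube k := interior_subset_OT k hp
  have h2 : Bn k' p ∈ ocube k' := interior_subset_OT k' hp'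
  by_cases hz : ∀ i, isZ i → k i = k' i
  · have hB : Bn k p = Bn k' p := by
      ext c
      simp only [Bn, sh_congr hz (fun _ _ => rfl) c]
    rcases Function.ne_iff.1 hkk with ⟨c, hc⟩
    have e1 := h1 c
    have e2 := h2 c
    rw [hB] at e1
    have ha : (k c : ℝ) < (k' c : ℝ) + 1 := lt_trans e1.1 e2.2
    have hb : (k' c : ℝ) < (k c : ℝ) + 1 := lt_trans e2.1 e1.2
    have ha' : k c < k' c + 1 := by exact_mod_cast ha
    have hb' : k' c < k c + 1 := by exact_mod_cast hb
    exact hc (by omega)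
  · push_neg at hz
    rcases hz with ⟨i, hi, hne⟩
    have e1 := h1 i
    have e2 := h2 i
    have hBz : Bn k p i = p i := Bn_apply_z (not_isS_of_isZ hi)
    have hBz' : Bn k' p i = p i := Bn_apply_z (not_isS_of_isZ hi)
    rw [hBz] at e1; rw [hBz'] at e2
    have ha : (k i : ℝ) < (k' i : ℝ) + 1 := lt_trans e1.1 e2.2
    have hb : (k' i : ℝ) < (k i : ℝ) + 1 := lt_trans e2.1 e1.2
    have ha' : k i < k' i + 1 := by exact_mod_cast ha
    have hb' : k' i < k i + 1 := by exact_mod_cast hb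
    exact hne (by omega)
/-! ### Covering -/

lemma exists_Tile_mem (p : Ed d) : ∃ k, p ∈ Tile k := by
  classical
  set k0 : Fin d → ℤ := fun c => ⌊p c⌋ with hk0
  set k : Fin d → ℤ := fun c => if isZ c then ⌊p c⌋ else ⌊Bn k0 p c⌋ with hk
  have hagree : ∀ i, isZ i → k i = k0 i := by intro i hi; simp [hk, hk0, hi]
  have hBeq : Bn k p = Bn k0 p := by
    ext c; simp only [Bn, sh_congr hagree (fun _ _ => rfl) c]
  refine ⟨k, ?_⟩
  have hmem : Bn k p ∈ cube k := by
    rw [hBeq]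
    intro c
    by_cases hc : isZ c
    · have h1 : Bn k0 p c = p c := Bn_apply_z (not_isS_of_isZ hc)
      have h2 : k c = ⌊p c⌋ := by simp [hk, hc]
      rw [h1, h2]
      exact ⟨Int.floor_le _, le_of_lt (Int.lt_floor_add_one _)⟩
    · have h2 : k c = ⌊Bn k0 p c⌋ := by simp [hk, hc]
      rw [h2]
      exact ⟨Int.floor_le _, le_of_lt (Int.lt_floor_add_one _)⟩
  exact hmem

/-! ### Extreme points -/

lemma extremePoints_image_affine {g h : Ed d → Ed d}
    (hgh : ∀ p, g (h p) = p) (hhg : ∀ q, h (g q) = q)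
    (hg : ∀ (a b : ℝ) (p q : Ed d), a + b = 1 → g (a • p + b • q) = a • g p + b • g q)
    (s : Set (Ed d)) : Set.extremePoints ℝ (g '' s) = g '' Set.extremePoints ℝ s := by
  have hh : ∀ (a b : ℝ) (p q : Ed d), a + b = 1 → h (a • p + b • q) = a • h p + b • h q := by
    intro a b p q hab
    have h1 := hg a b (h p) (h q) hab
    rw [hgh, hgh] at h1
    rw [← h1, hhg]
  ext p
  simp only [mem_extremePoints, mem_image]
  constructor
  · rintro ⟨⟨q, hq, rfl⟩, hext⟩
    refine ⟨q, ⟨hq, ?_⟩, rfl⟩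
    intro x1 hx1 x2 hx2 hseg
    obtain ⟨a, b, ha, hb, hab, hsum⟩ := hseg
    have h1 : g q ∈ openSegment ℝ (g x1) (g x2) := by
      refine ⟨a, b, ha, hb, hab, ?_⟩
      rw [← hg a b x1 x2 hab, hsum]
    have h2 := hext (g x1) ⟨x1, hx1, rfl⟩ (g x2) ⟨x2, hx2, rfl⟩ h1
    constructor
    · have h3 := congrArg h h2.1; rwa [hhg, hhg] at h3
    · have h3 := congrArg h h2.2; rwa [hhg, hhg] at h3
  · rintro ⟨q, ⟨hq, hext⟩, rfl⟩
    refine ⟨⟨q, hq, rfl⟩, ?_⟩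
    intro x1 hx1 x2 hx2 hseg
    obtain ⟨y1, hy1, rfl⟩ := hx1
    obtain ⟨y2, hy2, rfl⟩ := hx2
    obtain ⟨a, b, ha, hb, hab, hsum⟩ := hseg
    have hq' : q ∈ openSegment ℝ y1 y2 := by
      refine ⟨a, b, ha, hb, hab, ?_⟩
      have h1 := congrArg h hsum
      rwa [hh a b _ _ hab, hhg, hhg, hhg] at h1
    have hres := hext y1 hy1 y2 hy2 hq'
    rw [hres.1, hres.2]
    exact ⟨rfl, rfl⟩

def corners (k : Fin d → ℤ) : Set (Ed d) :=
  {q | ∀ c, q c = (k c : ℝ) ∨ q c = (k c : ℝ) + 1}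

lemma corners_subset_cube {k : Fin d → ℤ} : corners k ⊆ cube k := by
  intro q hq c
  rcases hq c with h | h <;> rw [h] <;> constructor <;> linarith

lemma extremePoints_cube (k : Fin d → ℤ) : Set.extremePoints ℝ (cube k) = corners k := by
  ext q
  rw [mem_extremePoints]
  constructor
  · rintro ⟨hq, hext⟩ c
    by_contra hc
    push_neg at hc
    have hlo : (k c : ℝ) < q c := lt_of_le_of_ne (hq c).1 (Ne.symm hc.1)
    have hhi : q c < (k c : ℝ) + 1 := lt_of_le_of_ne (hq c).2 hc.2
    set δ : ℝ := min (q c - k c) ((k c : ℝ) + 1 - q c) with hδdef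
    have hδ : 0 < δ := lt_min (by linarith) (by linarith)
    have hδ1 : δ ≤ q c - k c := min_le_left _ _
    have hδ2 : δ ≤ (k c : ℝ) + 1 - q c := min_le_right _ _
    set x1 : Ed d := WithLp.toLp 2 (fun c' => if c' = c then q c - δ else q c') with hx1def
    set x2 : Ed d := WithLp.toLp 2 (fun c' => if c' = c then q c + δ else q c') with hx2def
    have hx1 : x1 ∈ cube k := by
      intro c'
      by_cases hcc : c' = c
      · subst hcc; simp only [hx1def, if_pos rfl, ↓reduceIte]
        constructor <;> linarith
      · simp only [hx1def, if_neg hcc]; exact hq c'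
    have hx2 : x2 ∈ cube k := by
      intro c'
      by_cases hcc : c' = c
      · subst hcc; simp only [hx2def, if_pos rfl, ↓reduceIte]
        constructor <;> linarith
      · simp only [hx2def, if_neg hcc]; exact hq c'
    have hseg : q ∈ openSegment ℝ x1 x2 := by
      refine ⟨(1:ℝ)/2, (1:ℝ)/2, by norm_num, by norm_num, by norm_num, ?_⟩
      ext c'
      have hc1 : (((1:ℝ)/2) • x1 + ((1:ℝ)/2) • x2) c' = (1/2) * x1 c' + (1/2) * x2 c' := rfl
      rw [hc1]
      by_cases hcc : c' = c
      · subst hcc; simp only [hx1def, hx2def, if_pos rfl, ↓reduceIte]; ring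
      · simp only [hx1def, hx2def, if_neg hcc]; ring
    have := (hext x1 hx1 x2 hx2 hseg).1
    have hcoord : x1 c = q c := by rw [this]
    simp only [hx1def, if_pos rfl, ↓reduceIte] at hcoord
    linarith
  · intro hcor
    refine ⟨corners_subset_cube hcor, ?_⟩
    intro x1 hx1 x2 hx2 hseg
    obtain ⟨a, b, ha, hb, hab, hsum⟩ := hseg
    have key : ∀ c, x1 c = q c ∧ x2 c = q c := by
      intro c
      have hs : a * x1 c + b * x2 c = q c := by rw [← hsum]; rfl
      have e0 : a * (k c : ℝ) + b * (k c : ℝ) = (k c : ℝ) := by rw [← add_mul, hab, one_mul]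
      have e1 : a * ((k c : ℝ) + 1) + b * ((k c : ℝ) + 1) = (k c : ℝ) + 1 := by
        rw [← add_mul, hab, one_mul]
      rcases hcor c with h | h
      · have h1 := (hx1 c).1
        have h2 := (hx2 c).1
        have t1 := mul_le_mul_of_nonneg_left h1 ha.le
        have t2 := mul_le_mul_of_nonneg_left h2 hb.le
        constructor
        · by_contra hne
          have hne' : (k c : ℝ) ≠ x1 c := fun e => hne (by rw [← e, h])
          have hlt := mul_lt_mul_of_pos_left (lt_of_le_of_ne h1 hne') ha
          rw [h] at hs
          linarith
        · by_contra hne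
          have hne' : (k c : ℝ) ≠ x2 c := fun e => hne (by rw [← e, h])
          have hlt := mul_lt_mul_of_pos_left (lt_of_le_of_ne h2 hne') hb
          rw [h] at hs
          linarith
      · have h1 := (hx1 c).2
        have h2 := (hx2 c).2
        have t1 := mul_le_mul_of_nonneg_left h1 ha.le
        have t2 := mul_le_mul_of_nonneg_left h2 hb.le
        constructor
        · by_contra hne
          have hne' : x1 c ≠ (k c : ℝ) + 1 := fun e => hne (by rw [e, h])
          have hlt := mul_lt_mul_of_pos_left (lt_of_le_of_ne h1 hne') ha
          rw [h] at hs
          linarith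
        · by_contra hne
          have hne' : x2 c ≠ (k c : ℝ) + 1 := fun e => hne (by rw [e, h])
          have hlt := mul_lt_mul_of_pos_left (lt_of_le_of_ne h2 hne') hb
          rw [h] at hs
          linarith
    constructor
    · ext c; exact (key c).1
    · ext c; exact (key c).2

lemma corners_finite (k : Fin d → ℤ) : (corners k).Finite := by
  classical
  apply Set.Finite.subset (Set.finite_range
    (fun s : Fin d → Bool => (fun c => (k c : ℝ) + if s c then 1 else 0 : Ed d)))
  intro q hq
  refine ⟨fun c => if q c = (k c : ℝ) then false else true, ?_⟩
  ext c
  rcases hq c with h | h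
  · simp [h]
  · by_cases h2 : q c = (k c : ℝ)
    · simp [h2]
    · simp only [if_neg h2]
      rw [h]; norm_num

lemma extremePoints_Tile (k : Fin d → ℤ) :
    Set.extremePoints ℝ (Tile k) = An k '' corners k := by
  rw [← An_image_cube, extremePoints_image_affine (An_Bn k) (Bn_An k)
    (fun a b p q hab => An_combo k p q hab), extremePoints_cube]

lemma isConvexPolytope_Tile (k : Fin d → ℤ) : IsConvexPolytope d (Tile k) := by
  refine ⟨isCompact_Tile k, convex_Tile k, interior_nonempty_Tile k, ?_⟩
  rw [extremePoints_Tile]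
  exact (corners_finite k).image _

lemma isTiling_TT : IsTiling d (TT d) := by
  refine ⟨Set.countable_range _, ?_, ?_, ?_⟩
  · rintro P ⟨k, rfl⟩
    exact isConvexPolytope_Tile k
  · rw [eq_univ_iff_forall]
    intro p
    obtain ⟨k, hk⟩ := exists_Tile_mem p
    exact ⟨Tile k, ⟨k, rfl⟩, hk⟩
  · rintro P ⟨k, rfl⟩ Q ⟨k', rfl⟩ hne
    exact interior_Tile_disjoint (fun h => hne (by rw [h]))
/-! ### Face-to-face -/

lemma combo_endpoint_hi {a b x y hi : ℝ} (ha : 0 < a) (hb : 0 < b) (hab : a + b = 1)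
    (hx : x ≤ hi) (hy : y ≤ hi) (hs : a * x + b * y = hi) : x = hi ∧ y = hi := by
  have e : a * hi + b * hi = hi := by rw [← add_mul, hab, one_mul]
  constructor
  · by_contra hne
    have hlt := mul_lt_mul_of_pos_left (lt_of_le_of_ne hx hne) ha
    have t2 := mul_le_mul_of_nonneg_left hy hb.le
    linarith
  · by_contra hne
    have hlt := mul_lt_mul_of_pos_left (lt_of_le_of_ne hy hne) hb
    have t1 := mul_le_mul_of_nonneg_left hx ha.le
    linarith

lemma combo_endpoint_lo {a b x y lo : ℝ} (ha : 0 < a) (hb : 0 < b) (hab : a + b = 1)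
    (hx : lo ≤ x) (hy : lo ≤ y) (hs : a * x + b * y = lo) : x = lo ∧ y = lo := by
  have e : a * lo + b * lo = lo := by rw [← add_mul, hab, one_mul]
  constructor
  · by_contra hne
    have hlt := mul_lt_mul_of_pos_left (lt_of_le_of_ne hx (Ne.symm hne)) ha
    have t2 := mul_le_mul_of_nonneg_left hy hb.le
    linarith
  · by_contra hne
    have hlt := mul_lt_mul_of_pos_left (lt_of_le_of_ne hy (Ne.symm hne)) hb
    have t1 := mul_le_mul_of_nonneg_left hx ha.le
    linarith

def Bset (k k' : Fin d → ℤ) : Set (Ed d) :=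
  {q | ∀ i, isZ i → (k i = k' i ∨ (k' i = k i + 1 ∧ q i = (k i : ℝ) + 1) ∨
    (k i = k' i + 1 ∧ q i = (k i : ℝ)))}

lemma sh_eq_of_bdry {k k' : Fin d → ℤ} {p : Ed d} (h : p ∈ Bset k k') (c : Fin d) :
    sh k p c = sh k' p c := by
  unfold sh
  split_ifs with hS
  · rcases h (zo c) (isZ_zo hS) with h1 | ⟨h1, h2⟩ | ⟨h1, h2⟩
    · rw [h1]
    · have hc : (k' (zo c) : ℝ) = (k (zo c) : ℝ) + 1 := by exact_mod_cast h1
      have hff : (ff (k' (zo c)) : ℝ) = (ff (k (zo c)) : ℝ) + (ee (k (zo c)) : ℝ) := by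
        rw [h1, ff_rec]; push_cast; ring
      rw [h2, hff, hc]; ring
    · have hc : (k (zo c) : ℝ) = (k' (zo c) : ℝ) + 1 := by exact_mod_cast h1
      have hff : (ff (k (zo c)) : ℝ) = (ff (k' (zo c)) : ℝ) + (ee (k' (zo c)) : ℝ) := by
        rw [h1, ff_rec]; push_cast; ring
      rw [h2, hff, hc]; ring
  · rfl

lemma An_eq_of_bdry {k k' : Fin d → ℤ} {q : Ed d} (h : q ∈ Bset k k') : An k q = An k' q := by
  ext c; simp only [An, sh_eq_of_bdry h c]

lemma Bn_eq_of_bdry {k k' : Fin d → ℤ} {p : Ed d} (h : p ∈ Bset k k') : Bn k p = Bn k' p := by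
  ext c; simp only [Bn, sh_eq_of_bdry h c]

lemma Tile_inter (k k' : Fin d → ℤ) :
    Tile k ∩ Tile k' = An k '' (cube k ∩ cube k' ∩ Bset k k') := by
  ext p
  constructor
  · rintro ⟨h1, h2⟩
    have hq1 : Bn k p ∈ cube k := h1
    have hq2 : Bn k' p ∈ cube k' := h2
    have hB : p ∈ Bset k k' := by
      intro i hi
      have hz1 := hq1 i
      have hz2 := hq2 i
      rw [Bn_apply_z (not_isS_of_isZ hi)] at hz1 hz2
      have c1 : (k i : ℝ) ≤ (k' i : ℝ) + 1 := le_trans hz1.1 hz2.2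
      have c2 : (k' i : ℝ) ≤ (k i : ℝ) + 1 := le_trans hz2.1 hz1.2
      have c1' : k i ≤ k' i + 1 := by exact_mod_cast c1
      have c2' : k' i ≤ k i + 1 := by exact_mod_cast c2
      rcases lt_trichotomy (k i) (k' i) with hlt | heq | hgt
      · right; left
        have hk : k' i = k i + 1 := by omega
        refine ⟨hk, ?_⟩
        have : ((k' i : ℝ)) = (k i : ℝ) + 1 := by exact_mod_cast hk
        linarith [hz1.2, hz2.1]
      · exact Or.inl heq
      · right; right
        have hk : k i = k' i + 1 := by omega
        refine ⟨hk, ?_⟩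
        have : ((k i : ℝ)) = (k' i : ℝ) + 1 := by exact_mod_cast hk
        linarith [hz1.1, hz2.2]
    have hqq : Bn k p = Bn k' p := Bn_eq_of_bdry hB
    refine ⟨Bn k p, ⟨⟨hq1, by rw [hqq]; exact hq2⟩, ?_⟩, An_Bn k p⟩
    intro i hi
    have := hB i hi
    rwa [← Bn_apply_z (k := k) (p := p) (not_isS_of_isZ hi)] at this
  · rintro ⟨q, ⟨⟨hq1, hq2⟩, hB⟩, rfl⟩
    constructor
    · exact An_mem_Tile hq1
    · rw [An_eq_of_bdry hB]
      exact An_mem_Tile hq2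

lemma isExtreme_core (k k' : Fin d → ℤ) :
    IsExtreme ℝ (cube k) (cube k ∩ cube k' ∩ Bset k k') := by
  constructor
  · exact fun q h => h.1.1
  · intro x1 hx1 x2 hx2 z hz hseg
    obtain ⟨a, b, ha, hb, hab, hsum⟩ := hseg
    obtain ⟨⟨hzc, hzc'⟩, hzB⟩ := hz
    have hcoord : ∀ c, a * x1 c + b * x2 c = z c := fun c => congrArg (fun v : Ed d => v c) hsum
    -- coordinatewise membership in cube k'
    have key : ∀ c, (x1 c ∈ Icc (k' c : ℝ) ((k' c : ℝ) + 1) ∧ x2 c ∈ Icc (k' c : ℝ) ((k' c : ℝ) + 1)) := by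
      intro c
      have hz1 := hzc c
      have hz2 := hzc' c
      have hx1c := hx1 c
      have hx2c := hx2 c
      have c1' : k c ≤ k' c + 1 := by exact_mod_cast le_trans hz1.1 hz2.2
      have c2' : k' c ≤ k c + 1 := by exact_mod_cast le_trans hz2.1 hz1.2
      rcases lt_trichotomy (k c) (k' c) with hlt | heq | hgt
      · have hk : k' c = k c + 1 := by omega
        have hkr : (k' c : ℝ) = (k c : ℝ) + 1 := by exact_mod_cast hk
        have hze : z c = (k c : ℝ) + 1 := le_antisymm hz1.2 (by rw [← hkr]; exact hz2.1)
        have hend := combo_endpoint_hi ha hb hab hx1c.2 hx2c.2 (by rw [hcoord c, hze])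
        rw [mem_Icc, mem_Icc, hend.1, hend.2, hkr]
        norm_num
      · rw [← heq]; exact ⟨hx1c, hx2c⟩
      · have hk : k c = k' c + 1 := by omega
        have hkr : (k c : ℝ) = (k' c : ℝ) + 1 := by exact_mod_cast hk
        have hze : z c = (k c : ℝ) := le_antisymm (by rw [hkr]; exact hz2.2) hz1.1
        have hend := combo_endpoint_lo ha hb hab hx1c.1 hx2c.1 (by rw [hcoord c, hze])
        rw [mem_Icc, mem_Icc, hend.1, hend.2, hkr]
        norm_num
    have hBmem : ∀ (x : Ed d), (∀ c, a * x1 c + b * x2 c = z c) → x1 ∈ Bset k k' ∧ x2 ∈ Bset k k' := by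
      intro _ _
      constructor <;> intro i hi <;> rcases hzB i hi with h1 | ⟨h1, h2⟩ | ⟨h1, h2⟩
      · exact Or.inl h1
      · refine Or.inr (Or.inl ⟨h1, ?_⟩)
        exact (combo_endpoint_hi ha hb hab (hx1 i).2 (hx2 i).2 (by rw [hcoord i, h2])).1
      · refine Or.inr (Or.inr ⟨h1, ?_⟩)
        exact (combo_endpoint_lo ha hb hab (hx1 i).1 (hx2 i).1 (by rw [hcoord i, h2])).1
      · exact Or.inl h1
      · refine Or.inr (Or.inl ⟨h1, ?_⟩)
        exact (combo_endpoint_hi ha hb hab (hx1 i).2 (hx2 i).2 (by rw [hcoord i, h2])).2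
      · refine Or.inr (Or.inr ⟨h1, ?_⟩)
        exact (combo_endpoint_lo ha hb hab (hx1 i).1 (hx2 i).1 (by rw [hcoord i, h2])).2
    obtain ⟨hB1, hB2⟩ := hBmem x1 hcoord
    exact ⟨⟨hx1, fun c => (key c).1⟩, hB1⟩

lemma isExtreme_image {g h : Ed d → Ed d}
    (hgh : ∀ p, g (h p) = p) (hhg : ∀ q, h (g q) = q)
    (hg : ∀ (a b : ℝ) (p q : Ed d), a + b = 1 → g (a • p + b • q) = a • g p + b • g q)
    {s t : Set (Ed d)} (hst : IsExtreme ℝ s t) : IsExtreme ℝ (g '' s) (g '' t) := by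
  constructor
  · exact Set.image_mono hst.1
  · rintro x1 ⟨y1, hy1, rfl⟩ x2 ⟨y2, hy2, rfl⟩ z ⟨w, hw, rfl⟩ hseg
    obtain ⟨a, b, ha, hb, hab, hsum⟩ := hseg
    have hw' : w ∈ openSegment ℝ y1 y2 := by
      refine ⟨a, b, ha, hb, hab, ?_⟩
      have h1 := congrArg h hsum
      have hh : ∀ (a b : ℝ) (p q : Ed d), a + b = 1 → h (a • p + b • q) = a • h p + b • h q := by
        intro a b p q hab'
        have h2 := hg a b (h p) (h q) hab'
        rw [hgh, hgh] at h2
        rw [← h2, hhg]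
      rwa [hh a b _ _ hab, hhg, hhg, hhg] at h1
    have := hst.2 hy1 hy2 hw hw'
    exact ⟨y1, this, rfl⟩

lemma faceToFace_TT : FaceToFace d (TT d) := by
  rintro P ⟨k, rfl⟩ Q ⟨k', rfl⟩ _
  constructor
  · rw [Tile_inter k k', ← An_image_cube k]
    exact isExtreme_image (An_Bn k) (Bn_An k) (fun a b p q hab => An_combo k p q hab)
      (isExtreme_core k k')
  · rw [Set.inter_comm, Tile_inter k' k, ← An_image_cube k']
    exact isExtreme_image (An_Bn k') (Bn_An k') (fun a b p q hab => An_combo k' p q hab)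
      (isExtreme_core k' k)
/-! ### Vertices and coronas -/

def vert (u : Fin d → ℤ) : Ed d :=
  fun c => (u c : ℝ) + (if isS c then (ff (u (zo c)) : ℝ) else 0)

def box (u : Fin d → ℤ) : Set (Fin d → ℤ) := {k | ∀ c, k c = u c - 1 ∨ k c = u c}

lemma vert_apply_nS {u : Fin d → ℤ} {c : Fin d} (h : ¬ isS c) : vert u c = (u c : ℝ) := by
  simp [vert, h]

lemma vert_apply_S {u : Fin d → ℤ} {c : Fin d} (h : isS c) :
    vert u c = (u c : ℝ) + (ff (u (zo c)) : ℝ) := by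
  simp [vert, h]

lemma ff_pred (n : ℤ) : (ff n : ℝ) = (ff (n - 1) : ℝ) + (ee (n - 1) : ℝ) := by
  have h := ff_rec (n - 1)
  rw [sub_add_cancel] at h
  rw [h]; push_cast; ring

lemma vertex_extract {x : Ed d} {k : Fin d → ℤ} (hx : x ∈ Set.extremePoints ℝ (Tile k)) :
    ∃ u : Fin d → ℤ, x = vert u := by
  classical
  rw [extremePoints_Tile] at hx
  obtain ⟨q, hq, rfl⟩ := hx
  set u : Fin d → ℤ := fun c => if q c = (k c : ℝ) then k c else k c + 1 with hu
  have hqu : ∀ c, q c = (u c : ℝ) := by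
    intro c
    rcases hq c with h | h
    · simp [hu, h]
    · by_cases h2 : q c = (k c : ℝ)
      · simp [hu, h2]
      · simp only [hu, if_neg h2]
        rw [h]; push_cast; ring
  refine ⟨u, ?_⟩
  ext c
  by_cases hS : isS c
  · rw [vert_apply_S hS]
    have hAn : An k q c = q c + ((ff (k (zo c)) : ℝ) + (q (zo c) - (k (zo c) : ℝ)) * (ee (k (zo c)) : ℝ)) := by
      simp [An, sh, hS]
    rw [hAn, hqu c]
    congr 1
    rw [hqu (zo c)]
    have : u (zo c) = k (zo c) ∨ u (zo c) = k (zo c) + 1 := by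
      simp only [hu]; split_ifs <;> simp
    rcases this with h | h
    · rw [h]; push_cast; ring
    · rw [h]
      have hr : (ff (k (zo c) + 1) : ℝ) = (ff (k (zo c)) : ℝ) + (ee (k (zo c)) : ℝ) := by
        rw [ff_rec]; push_cast; ring
      rw [hr]; push_cast; ring
  · rw [vert_apply_nS hS]
    have hAn : An k q c = q c := by simp [An, sh, hS]
    rw [hAn, hqu c]

lemma vertex_data {x : Ed d} (hx : IsVertex d (TT d) x) : ∃ u : Fin d → ℤ, x = vert u := by
  obtain ⟨P, ⟨k, rfl⟩, hx⟩ := hx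
  exact vertex_extract hx

lemma Bn_vert {u k : Fin d → ℤ} (hz : ∀ i, isZ i → (k i = u i - 1 ∨ k i = u i)) (c : Fin d) :
    Bn k (vert u) c = (u c : ℝ) := by
  by_cases hS : isS c
  · have hv : vert u (zo c) = (u (zo c) : ℝ) := vert_apply_nS (not_isS_zo hS)
    have hsh : sh k (vert u) c =
        (ff (k (zo c)) : ℝ) + ((u (zo c) : ℝ) - (k (zo c) : ℝ)) * (ee (k (zo c)) : ℝ) := by
      simp [sh, hS, hv]
    rw [show Bn k (vert u) c = vert u c - sh k (vert u) c from rfl, hsh, vert_apply_S hS]  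
    rcases hz (zo c) (isZ_zo hS) with h | h
    · rw [h, ff_pred (u (zo c))]
      push_cast; ring
    · rw [h]; push_cast; ring
  · rw [Bn_apply_z hS, vert_apply_nS hS]

lemma mem_Tile_vert_iff {u k : Fin d → ℤ} : vert u ∈ Tile k ↔ k ∈ box u := by
  constructor
  · intro h
    have hz : ∀ i, isZ i → (k i = u i - 1 ∨ k i = u i) := by
      intro i hi
      have hc := h i
      rw [Bn_apply_z (not_isS_of_isZ hi), vert_apply_nS (not_isS_of_isZ hi)] at hc
      have h1 : k i ≤ u i := by exact_mod_cast hc.1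
      have h2 : (u i : ℝ) ≤ (k i : ℝ) + 1 := hc.2
      have h2' : u i ≤ k i + 1 := by exact_mod_cast h2
      omega
    intro c
    have hc := h c
    rw [Bn_vert hz c] at hc
    have h1 : k c ≤ u c := by exact_mod_cast hc.1
    have h2' : u c ≤ k c + 1 := by have h2 : (u c : ℝ) ≤ (k c : ℝ) + 1 := hc.2; exact_mod_cast h2
    omega
  · intro hbox
    have hz : ∀ i, isZ i → (k i = u i - 1 ∨ k i = u i) := fun i _ => hbox i
    intro c
    rw [Bn_vert hz c]
    rcases hbox c with h | h <;> rw [h] <;> constructor <;> push_cast <;> linarith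

lemma corona_eq (u : Fin d → ℤ) :
    {P | P ∈ TT d ∧ vert u ∈ P} = Tile '' box u := by
  ext P
  constructor
  · rintro ⟨⟨k, rfl⟩, hx⟩
    exact ⟨k, mem_Tile_vert_iff.1 hx, rfl⟩
  · rintro ⟨k, hk, rfl⟩
    exact ⟨⟨k, rfl⟩, mem_Tile_vert_iff.2 hk⟩
/-! ### Signs -/

def epsZ (m n : ℤ) : ℤ := if Even (m + n) then 1 else -1

def delS (m n : ℤ) : ℤ :=
  if Even m then (if Even n then ee (n - 1) * ee (m - 1) else -(ee n * ee (m - 1)))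
  else (if Even n then -(ee (n - 1) * ee m) else ee n * ee m)

lemma pm_mul {a b : ℤ} (ha : a = 1 ∨ a = -1) (hb : b = 1 ∨ b = -1) :
    a * b = 1 ∨ a * b = -1 := by rcases ha with rfl | rfl <;> rcases hb with rfl | rfl <;> norm_num

lemma odd_pred {m : ℤ} (h : Even m) : Odd (m - 1) := by
  obtain ⟨t, rfl⟩ := h; exact ⟨t - 1, by ring⟩

lemma even_pred {m : ℤ} (h : Odd m) : Even (m - 1) := by
  obtain ⟨t, rfl⟩ := h; exact ⟨t, by ring⟩

lemma epsZ_units (m n : ℤ) : epsZ m n = 1 ∨ epsZ m n = -1 := by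
  unfold epsZ; split_ifs <;> simp

lemma neg_pm {a : ℤ} (h : a = 1 ∨ a = -1) : -a = 1 ∨ -a = -1 := by
  rcases h with rfl | rfl <;> norm_num

lemma delS_units (m n : ℤ) : delS m n = 1 ∨ delS m n = -1 := by
  unfold delS
  rcases Int.even_or_odd m with hm | hm <;> rcases Int.even_or_odd n with hn | hn
  · rw [if_pos hm, if_pos hn]; exact pm_mul (ee_odd (odd_pred hn)) (ee_odd (odd_pred hm))
  · rw [if_pos hm, if_neg (by exact (Int.not_even_iff_odd).2 hn)]
    exact neg_pm (pm_mul (ee_odd hn) (ee_odd (odd_pred hm)))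
  · rw [if_neg ((Int.not_even_iff_odd).2 hm), if_pos hn]
    exact neg_pm (pm_mul (ee_odd (odd_pred hn)) (ee_odd hm))
  · rw [if_neg ((Int.not_even_iff_odd).2 hm), if_neg ((Int.not_even_iff_odd).2 hn)]
    exact pm_mul (ee_odd hn) (ee_odd hm)

lemma epsZ_symm (m n : ℤ) : epsZ m n = epsZ n m := by unfold epsZ; rw [add_comm]

lemma delS_symm (m n : ℤ) : delS m n = delS n m := by
  unfold delS
  rcases Int.even_or_odd m with hm | hm <;> rcases Int.even_or_odd n with hn | hn
  · rw [if_pos hm, if_pos hn, if_pos hn, if_pos hm]; ring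
  · rw [if_pos hm, if_neg ((Int.not_even_iff_odd).2 hn), if_neg ((Int.not_even_iff_odd).2 hn), if_pos hm]; ring
  · rw [if_neg ((Int.not_even_iff_odd).2 hm), if_pos hn, if_pos hn, if_neg ((Int.not_even_iff_odd).2 hm)]; ring
  · rw [if_neg ((Int.not_even_iff_odd).2 hm), if_neg ((Int.not_even_iff_odd).2 hn),
      if_neg ((Int.not_even_iff_odd).2 hn), if_neg ((Int.not_even_iff_odd).2 hm)]; ring

lemma sign_cond_even (m n : ℤ) (h : Even (m + n)) :
    ee n = delS m n * ee m ∧ ee (n - 1) = delS m n * ee (m - 1) := by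
  unfold delS
  rcases Int.even_or_odd m with hm | hm
  · have hn : Even n := by rw [Int.even_iff] at h hm ⊢; omega
    rw [if_pos hm, if_pos hn, ee_even hm, ee_even hn]
    refine ⟨by ring, ?_⟩
    have e : ee (n-1) * ee (m-1) * ee (m-1) = ee (n-1) * (ee (m-1) * ee (m-1)) := by ring
    rw [e, ee_sq (odd_pred hm), mul_one]
  · have hn : Odd n := by rw [Int.even_iff] at h; rw [Int.odd_iff] at hm ⊢; omega
    rw [if_neg ((Int.not_even_iff_odd).2 hm), if_neg ((Int.not_even_iff_odd).2 hn)]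
    constructor
    · have e : ee n * ee m * ee m = ee n * (ee m * ee m) := by ring
      rw [e, ee_sq hm, mul_one]
    · rw [ee_even (even_pred hn), ee_even (even_pred hm)]; ring

lemma sign_cond_odd (m n : ℤ) (h : ¬ Even (m + n)) :
    ee (n - 1) = -(delS m n) * ee m ∧ ee n = -(delS m n) * ee (m - 1) := by
  unfold delS
  rcases Int.even_or_odd m with hm | hm
  · have hn : Odd n := by rw [Int.even_iff] at h hm; rw [Int.odd_iff]; omega
    rw [if_pos hm, if_neg ((Int.not_even_iff_odd).2 hn)]
    constructor
    · rw [ee_even (even_pred hn), ee_even hm]; ring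
    · have e : -(-(ee n * ee (m-1))) * ee (m-1) = ee n * (ee (m-1) * ee (m-1)) := by ring
      rw [e, ee_sq (odd_pred hm), mul_one]
  · have hn : Even n := by rw [Int.even_iff] at h ⊢; rw [Int.odd_iff] at hm; omega
    rw [if_neg ((Int.not_even_iff_odd).2 hm), if_pos hn]
    constructor
    · have e : -(-(ee (n-1) * ee m)) * ee m = ee (n-1) * (ee m * ee m) := by ring
      rw [e, ee_sq hm, mul_one]
    · rw [ee_even hn, ee_even (even_pred hm)]; ring

def sgn0 (u v : Fin d → ℤ) (c : Fin d) : ℤ :=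
  if isZ c then epsZ (u c) (v c) else if isS c then delS (u (zo c)) (v (zo c)) else 1

def sgn (u v : Fin d → ℤ) (c : Fin d) : ℤ :=
  sgn0 u v c * (if (c : ℕ) = d - 1 then ∏ c', sgn0 u v c' else 1)

lemma sgn0_units (u v : Fin d → ℤ) (c : Fin d) : sgn0 u v c = 1 ∨ sgn0 u v c = -1 := by
  unfold sgn0
  split_ifs
  · exact epsZ_units _ _
  · exact delS_units _ _
  · simp

lemma sgn0_prod_units (u v : Fin d → ℤ) :
    (∏ c', sgn0 u v c') = 1 ∨ (∏ c', sgn0 u v c') = -1 := by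
  apply Finset.prod_induction _ (fun r => r = 1 ∨ r = -1)
  · exact fun a b ha hb => pm_mul ha hb
  · simp
  · intro c _; exact sgn0_units u v c

lemma sgn_units (u v : Fin d → ℤ) (c : Fin d) : sgn u v c = 1 ∨ sgn u v c = -1 := by
  unfold sgn
  split_ifs
  · exact pm_mul (sgn0_units u v c) (sgn0_prod_units u v)
  · rw [mul_one]; exact sgn0_units u v c

lemma sgn_symm (u v : Fin d → ℤ) : sgn u v = sgn v u := by
  have h0 : sgn0 u v = sgn0 v u := by
    funext c
    unfold sgn0
    split_ifs
    · exact epsZ_symm _ _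
    · exact delS_symm _ _
    · rfl
  unfold sgn; rw [h0]

lemma sgn_prod (u v : Fin d → ℤ) : (∏ c, sgn u v c) = 1 := by
  unfold sgn
  rw [Finset.prod_mul_distrib]
  rcases Nat.eq_zero_or_pos d with hd0 | hd0
  · subst hd0
    simp
  · have hlast : (⟨d - 1, by omega⟩ : Fin d) ∈ Finset.univ := Finset.mem_univ _
    have e : (∏ c : Fin d, if (c : ℕ) = d - 1 then ∏ c', sgn0 u v c' else 1)
        = ∏ c', sgn0 u v c' := by
      rw [Finset.prod_eq_single (⟨d - 1, by omega⟩ : Fin d)]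
      · simp
      · intro b _ hb
        rw [if_neg]
        intro hc
        apply hb
        apply Fin.ext
        simpa using hc
      · intro h; exact absurd hlast h
    rw [e]
    rcases sgn0_prod_units u v with h | h <;> rw [h] <;> norm_num

lemma sgn_eq_sgn0 {u v : Fin d → ℤ} {c : Fin d} (hc : (c : ℕ) ≠ d - 1) :
    sgn u v c = sgn0 u v c := by
  unfold sgn; rw [if_neg hc, mul_one]

lemma not_last_of_isZ (hd : 2 ≤ d) {c : Fin d} (h : isZ c) : (c : ℕ) ≠ d - 1 := by
  have := jd_bound hd
  simp only [isZ] at h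
  omega

lemma not_last_of_isS (hd : 2 ≤ d) {c : Fin d} (h : isS c) : (c : ℕ) ≠ d - 1 := by
  have := jd_bound hd
  rcases h with ⟨h1, h2⟩
  omega

lemma sgn_z (hd : 2 ≤ d) {u v : Fin d → ℤ} {c : Fin d} (h : isZ c) :
    sgn u v c = epsZ (u c) (v c) := by
  rw [sgn_eq_sgn0 (not_last_of_isZ hd h)]
  unfold sgn0; rw [if_pos h]

lemma sgn_s (hd : 2 ≤ d) {u v : Fin d → ℤ} {c : Fin d} (h : isS c) :
    sgn u v c = delS (u (zo c)) (v (zo c)) := by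
  rw [sgn_eq_sgn0 (not_last_of_isS hd h)]
  unfold sgn0; rw [if_neg (not_isZ_of_isS h), if_pos h]
/-! ### The isometry -/

def Lmap (s : Fin d → ℤ) : Ed d →ₗ[ℝ] Ed d where
  toFun p := (fun c => (s c : ℝ) * p c : Ed d)
  map_add' p q := by ext c; simp only [add_apply']; ring
  map_smul' a p := by
    ext c
    have h1 : ((a • p : Ed d)) c = a * p c := rfl
    have h2 : (a • (fun c => (s c : ℝ) * p c : Ed d)) c = a * ((s c : ℝ) * p c) := rfl
    simp only [RingHom.id_apply, h1, h2]
    ring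

lemma Lmap_invol {s : Fin d → ℤ} (hs : ∀ c, s c = 1 ∨ s c = -1) :
    Function.Involutive (Lmap s) := by
  intro p
  ext c
  have h1 : Lmap s (Lmap s p) c = (s c : ℝ) * ((s c : ℝ) * p c) := rfl
  rw [h1]
  rcases hs c with h | h <;> rw [h] <;> push_cast <;> ring

def Leq (s : Fin d → ℤ) (hs : ∀ c, s c = 1 ∨ s c = -1) : Ed d ≃ₗ[ℝ] Ed d :=
  LinearEquiv.ofInvolutive (Lmap s) (Lmap_invol hs)

lemma Leq_apply (s : Fin d → ℤ) (hs : ∀ c, s c = 1 ∨ s c = -1) (p : Ed d) (c : Fin d) :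
    Leq s hs p c = (s c : ℝ) * p c := rfl

def LIE (s : Fin d → ℤ) (hs : ∀ c, s c = 1 ∨ s c = -1) : Ed d ≃ₗᵢ[ℝ] Ed d where
  toLinearEquiv := Leq s hs
  norm_map' p := by
    rw [EuclideanSpace.norm_eq, EuclideanSpace.norm_eq]
    congr 1
    apply Finset.sum_congr rfl
    intro c _
    have h1 : Leq s hs p c = (s c : ℝ) * p c := rfl
    rw [h1, norm_mul]
    rcases hs c with h | h <;> rw [h] <;> push_cast <;> simp

def Fiso (u v : Fin d → ℤ) : Ed d ≃ᵃⁱ[ℝ] Ed d :=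
  (LIE (sgn u v) (sgn_units u v)).toAffineIsometryEquiv.trans
    (AffineIsometryEquiv.constVAdd ℝ (Ed d)
      (vert v - LIE (sgn u v) (sgn_units u v) (vert u)))

lemma Fiso_apply (u v : Fin d → ℤ) (p : Ed d) (c : Fin d) :
    Fiso u v p c = (sgn u v c : ℝ) * (p c - vert u c) + vert v c := by
  have h1 : Fiso u v p = (vert v - LIE (sgn u v) (sgn_units u v) (vert u)) +ᵥ
      LIE (sgn u v) (sgn_units u v) p := rfl
  rw [h1]
  have h2 : ((vert v - LIE (sgn u v) (sgn_units u v) (vert u)) +ᵥ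
      LIE (sgn u v) (sgn_units u v) p) c
      = vert v c - (sgn u v c : ℝ) * vert u c + (sgn u v c : ℝ) * p c := rfl
  rw [h2]; ring

lemma Fiso_linear (u v : Fin d → ℤ) (p : Ed d) :
    (Fiso u v).linearIsometryEquiv p = LIE (sgn u v) (sgn_units u v) p := by
  have h := (Fiso u v).map_vadd (0 : Ed d) p
  have h0 : p +ᵥ (0 : Ed d) = p := by simp
  rw [h0] at h
  have h2 : (Fiso u v).linearIsometryEquiv p = Fiso u v p -ᵥ Fiso u v 0 := by
    rw [h]; simp
  rw [h2]
  ext c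
  have hv : (Fiso u v p -ᵥ Fiso u v 0) c = Fiso u v p c - Fiso u v 0 c := rfl
  rw [hv, Fiso_apply, Fiso_apply]
  have hz : (0 : Ed d) c = 0 := rfl
  rw [hz]
  have h3 : LIE (sgn u v) (sgn_units u v) p c = (sgn u v c : ℝ) * p c := rfl
  rw [h3]; ring

lemma det_diag (s : Fin d → ℤ) (hs : ∀ c, s c = 1 ∨ s c = -1) :
    LinearMap.det ((Leq s hs : Ed d ≃ₗ[ℝ] Ed d) : Ed d →ₗ[ℝ] Ed d) = ∏ c, (s c : ℝ) := by
  classical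
  set b := (EuclideanSpace.basisFun (Fin d) ℝ).toBasis with hb
  rw [← LinearMap.det_toMatrix b]
  have hm : LinearMap.toMatrix b b ((Leq s hs : Ed d ≃ₗ[ℝ] Ed d) : Ed d →ₗ[ℝ] Ed d)
      = Matrix.diagonal (fun c => (s c : ℝ)) := by
    ext r c'
    rw [LinearMap.toMatrix_apply]
    have hbc : b c' = EuclideanSpace.single c' (1 : ℝ) := by
      rw [hb, OrthonormalBasis.coe_toBasis, EuclideanSpace.basisFun_apply]
    have happ : ((Leq s hs : Ed d ≃ₗ[ℝ] Ed d) : Ed d →ₗ[ℝ] Ed d) (b c')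
        = (fun c => (s c : ℝ) * (EuclideanSpace.single c' (1:ℝ)) c : Ed d) := by
      rw [hbc]; rfl
    rw [happ]
    rw [hb, OrthonormalBasis.coe_toBasis_repr_apply, EuclideanSpace.basisFun_repr]
    dsimp only; rw [EuclideanSpace.single_apply]
    by_cases hrc : r = c'
    · subst hrc
      simp [Matrix.diagonal_apply_eq]
    · rw [Matrix.diagonal_apply_ne _ hrc, if_neg (by exact fun h => hrc h)]
      ring
  rw [hm, Matrix.det_diagonal]

lemma Fiso_orientation (u v : Fin d → ℤ) : OrientationPreserving d (Fiso u v) := by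
  unfold OrientationPreserving
  have hlin : ((Fiso u v).linearIsometryEquiv.toLinearEquiv : Ed d →ₗ[ℝ] Ed d)
      = ((Leq (sgn u v) (sgn_units u v) : Ed d ≃ₗ[ℝ] Ed d) : Ed d →ₗ[ℝ] Ed d) := by
    apply LinearMap.ext
    intro p
    exact Fiso_linear u v p
  rw [hlin, det_diag]
  have : (∏ c, ((sgn u v c : ℤ) : ℝ)) = ((∏ c, sgn u v c : ℤ) : ℝ) := by push_cast; ring
  rw [this, sgn_prod]
  norm_num
/-! ### The key shear identity -/

lemma shear_id (m n ki kc uc vc κi κc : ℤ) (qi qc ψi ψc : ℝ)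
    (hki : ki = m - 1 ∨ ki = m)
    (hκi : κi = if epsZ m n = 1 then ki - m + n else n - 1 - ki + m)
    (hκc : κc = if delS m n = 1 then kc - uc + vc else vc - 1 - kc + uc)
    (hψi : ψi = if epsZ m n = 1 then qi + ((κi : ℝ) - (ki : ℝ)) else (κi : ℝ) + 1 + (ki : ℝ) - qi)
    (hψc : ψc = if delS m n = 1 then qc + ((κc : ℝ) - (kc : ℝ)) else (κc : ℝ) + 1 + (kc : ℝ) - qc) :
    (delS m n : ℝ) * (qc + ((ff ki : ℝ) + (qi - (ki : ℝ)) * (ee ki : ℝ))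
        - ((uc : ℝ) + (ff m : ℝ))) + ((vc : ℝ) + (ff n : ℝ))
      = ψc + ((ff κi : ℝ) + (ψi - (κi : ℝ)) * (ee κi : ℝ)) := by
  subst hκi hκc hψi hψc
  by_cases hEv : Even (m + n)
  · have hεv : epsZ m n = 1 := by unfold epsZ; rw [if_pos hEv]
    obtain ⟨hC1, hC2⟩ := sign_cond_even m n hEv
    rcases delS_units m n with hδ | hδ
    · rw [hδ, one_mul] at hC1 hC2
      have hc1 : ((ee n : ℤ) : ℝ) = ((ee m : ℤ) : ℝ) := by exact_mod_cast hC1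
      have hc2 : ((ee (n - 1) : ℤ) : ℝ) = ((ee (m - 1) : ℤ) : ℝ) := by exact_mod_cast hC2
      rcases hki with h | h <;> rw [h, hεv, hδ]
      · simp only [reduceIte]
        simp only [show m - 1 - m + n = n - 1 from by ring]
        rw [ff_pred m, ff_pred n, hc2]
        push_cast
        ring
      · simp only [reduceIte]
        simp only [show m - m + n = n from by ring]
        rw [hc1]
        push_cast
        ring
    · rw [hδ] at hC1 hC2
      have hc1 : ((ee n : ℤ) : ℝ) = -((ee m : ℤ) : ℝ) := by rw [hC1]; push_cast; ring
      have hc2 : ((ee (n - 1) : ℤ) : ℝ) = -((ee (m - 1) : ℤ) : ℝ) := by rw [hC2]; push_cast; ring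
      rcases hki with h | h <;> rw [h, hεv, hδ]
      · simp only [reduceIte]
        simp only [show m - 1 - m + n = n - 1 from by ring]
        rw [ff_pred m, ff_pred n, hc2]
        push_cast
        ring
      · simp only [reduceIte]
        simp only [show m - m + n = n from by ring]
        rw [hc1]
        push_cast
        ring
  · have hεv : epsZ m n = -1 := by unfold epsZ; rw [if_neg hEv]
    obtain ⟨hC1, hC2⟩ := sign_cond_odd m n hEv
    rcases delS_units m n with hδ | hδ
    · rw [hδ] at hC1 hC2
      have hc1 : ((ee (n - 1) : ℤ) : ℝ) = -((ee m : ℤ) : ℝ) := by rw [hC1]; push_cast; ring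
      have hc2 : ((ee n : ℤ) : ℝ) = -((ee (m - 1) : ℤ) : ℝ) := by rw [hC2]; push_cast; ring
      rcases hki with h | h <;> rw [h, hεv, hδ]
      · simp only [reduceIte, show ((-1 : ℤ) = 1) = False from by simp, if_false]
        simp only [show n - 1 - (m - 1) + m = n from by ring]
        rw [ff_pred m, hc2]
        push_cast
        ring
      · simp only [reduceIte, show ((-1 : ℤ) = 1) = False from by simp, if_false]
        simp only [show n - 1 - m + m = n - 1 from by ring]
        rw [ff_pred n, hc1]
        push_cast
        ring
    · rw [hδ] at hC1 hC2
      have hc1 : ((ee (n - 1) : ℤ) : ℝ) = ((ee m : ℤ) : ℝ) := by rw [hC1]; push_cast; ring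
      have hc2 : ((ee n : ℤ) : ℝ) = ((ee (m - 1) : ℤ) : ℝ) := by rw [hC2]; push_cast; ring
      rcases hki with h | h <;> rw [h, hεv, hδ]
      · simp only [reduceIte, show ((-1 : ℤ) = 1) = False from by simp, if_false]
        simp only [show n - 1 - (m - 1) + m = n from by ring]
        rw [ff_pred m, hc2]
        push_cast
        ring
      · simp only [reduceIte, show ((-1 : ℤ) = 1) = False from by simp, if_false]
        simp only [show n - 1 - m + m = n - 1 from by ring]
        rw [ff_pred n, hc1]
        push_cast
        ring

/-! ### Mapping tiles -/

def kap (u v k : Fin d → ℤ) (c : Fin d) : ℤ :=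
  if sgn u v c = 1 then k c - u c + v c else v c - 1 - k c + u c

def psi (u v k : Fin d → ℤ) (q : Ed d) : Ed d :=
  fun c => if sgn u v c = 1 then q c + ((kap u v k c : ℝ) - (k c : ℝ))
           else (kap u v k c : ℝ) + 1 + (k c : ℝ) - q c

lemma F_An (hd : 2 ≤ d) {u v k : Fin d → ℤ} (hbox : k ∈ box u) (q : Ed d) :
    Fiso u v (An k q) = An (kap u v k) (psi u v k q) := by
  ext c
  rw [Fiso_apply]
  by_cases hS : isS c
  · have hL : An k q c
        = q c + ((ff (k (zo c)) : ℝ) + (q (zo c) - (k (zo c) : ℝ)) * (ee (k (zo c)) : ℝ)) := by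
      simp [An, sh, hS]
    have hR : An (kap u v k) (psi u v k q) c
        = psi u v k q c + ((ff (kap u v k (zo c)) : ℝ)
          + (psi u v k q (zo c) - (kap u v k (zo c) : ℝ)) * (ee (kap u v k (zo c)) : ℝ)) := by
      simp [An, sh, hS]
    rw [hL, hR, vert_apply_S hS, vert_apply_S hS, sgn_s hd hS]
    have hκi : kap u v k (zo c)
        = if epsZ (u (zo c)) (v (zo c)) = 1 then k (zo c) - u (zo c) + v (zo c)
          else v (zo c) - 1 - k (zo c) + u (zo c) := by
      unfold kap; rw [sgn_z hd (isZ_zo hS)]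
    have hκc : kap u v k c
        = if delS (u (zo c)) (v (zo c)) = 1 then k c - u c + v c
          else v c - 1 - k c + u c := by
      unfold kap; rw [sgn_s hd hS]
    have hψi : psi u v k q (zo c)
        = if epsZ (u (zo c)) (v (zo c)) = 1 then q (zo c) + ((kap u v k (zo c) : ℝ) - (k (zo c) : ℝ))
          else (kap u v k (zo c) : ℝ) + 1 + (k (zo c) : ℝ) - q (zo c) := by
      unfold psi; dsimp only; rw [sgn_z hd (isZ_zo hS)]
    have hψc : psi u v k q c
        = if delS (u (zo c)) (v (zo c)) = 1 then q c + ((kap u v k c : ℝ) - (k c : ℝ))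
          else (kap u v k c : ℝ) + 1 + (k c : ℝ) - q c := by
      unfold psi; dsimp only; rw [sgn_s hd hS]
    linear_combination shear_id (u (zo c)) (v (zo c)) (k (zo c)) (k c) (u c) (v c)
      (kap u v k (zo c)) (kap u v k c) (q (zo c)) (q c)
      (psi u v k q (zo c)) (psi u v k q c) (hbox (zo c)) hκi hκc hψi hψc
  · rw [An_apply_z hS, An_apply_z hS, vert_apply_nS hS, vert_apply_nS hS]
    unfold psi kap; dsimp only
    rcases sgn_units u v c with h | h <;> rw [h]
    · simp only [reduceIte]
      push_cast
      ring
    · simp only [reduceIte, show ((-1 : ℤ) = 1) = False from by simp, if_false]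
      push_cast
      ring

lemma psi_image_cube (u v k : Fin d → ℤ) : psi u v k '' cube k = cube (kap u v k) := by
  ext r
  constructor
  · rintro ⟨q, hq, rfl⟩ c
    have hqc := hq c
    unfold psi; dsimp only
    rcases sgn_units u v c with h | h <;> rw [h]
    · simp only [reduceIte]
      constructor <;> linarith [hqc.1, hqc.2]
    · simp only [reduceIte, show ((-1 : ℤ) = 1) = False from by simp, if_false]
      constructor <;> linarith [hqc.1, hqc.2]
  · intro hr
    classical
    refine ⟨fun c => if sgn u v c = 1 then r c - ((kap u v k c : ℝ) - (k c : ℝ))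
      else (kap u v k c : ℝ) + 1 + (k c : ℝ) - r c, ?_, ?_⟩
    · intro c
      have hrc := hr c
      dsimp only
      rcases sgn_units u v c with h | h <;> rw [h] <;>
        simp only [reduceIte, show ((-1 : ℤ) = 1) = False from by simp, if_false] <;>
        constructor <;> linarith [hrc.1, hrc.2]
    · ext c
      unfold psi
      dsimp only
      rcases sgn_units u v c with h | h <;> rw [h] <;>
        simp only [reduceIte, show ((-1 : ℤ) = 1) = False from by simp, if_false] <;> ring

lemma Fiso_image_Tile (hd : 2 ≤ d) {u v k : Fin d → ℤ} (hbox : k ∈ box u) :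
    (Fiso u v) '' Tile k = Tile (kap u v k) := by
  rw [← An_image_cube k, Set.image_image]
  have he : (fun q => Fiso u v (An k q)) = fun q => An (kap u v k) (psi u v k q) :=
    funext (F_An hd hbox)
  rw [he, ← Set.image_image, psi_image_cube, An_image_cube]

lemma kap_box {u v k : Fin d → ℤ} (hbox : k ∈ box u) : kap u v k ∈ box v := by
  intro c
  have hc := hbox c
  unfold kap
  rcases sgn_units u v c with h | h <;> rw [h] <;>
    simp only [reduceIte, show ((-1 : ℤ) = 1) = False from by simp, if_false] <;> omega

lemma kap_kap (u v k : Fin d → ℤ) : kap v u (kap u v k) = k := by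
  funext c
  unfold kap
  rw [← sgn_symm u v]
  rcases sgn_units u v c with h | h <;> rw [h] <;>
    simp only [reduceIte, show ((-1 : ℤ) = 1) = False from by simp, if_false] <;> ring

lemma monocoronalRM_TT (hd : 2 ≤ d) : MonocoronalRM d (TT d) := by
  intro x y hx hy
  obtain ⟨u, rfl⟩ := vertex_data hx
  obtain ⟨v, rfl⟩ := vertex_data hy
  refine ⟨Fiso u v, Fiso_orientation u v, ?_, ?_⟩
  · ext c; rw [Fiso_apply]; ring
  · rw [corona_eq, corona_eq]
    ext S
    constructor
    · rintro ⟨P, ⟨k, hk, rfl⟩, rfl⟩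
      exact ⟨kap u v k, kap_box hk, (Fiso_image_Tile hd hk).symm⟩
    · rintro ⟨k', hk', rfl⟩
      refine ⟨Tile (kap v u k'), ⟨kap v u k', kap_box hk', rfl⟩, ?_⟩
      show Fiso u v '' Tile (kap v u k') = Tile k'
      rw [Fiso_image_Tile hd (kap_box hk'), kap_kap]
/-! ### Period vectors -/

def Vset (d : ℕ) : Set (Ed d) :=
  {w | (∀ i, isZ i → w i = 0) ∧ ∀ c, ¬ isZ c → ∃ m : ℤ, w c = (m : ℝ)}

lemma Bn_translate {M : Fin d → ℤ} {w : Ed d} (hMz : ∀ i, isZ i → M i = 0)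
    (hw : ∀ c, w c = (M c : ℝ)) (k : Fin d → ℤ) (p : Ed d) (c : Fin d) :
    Bn (fun c' => k c' + M c') (w + p) c = Bn k p c + (M c : ℝ) := by
  have hsh : sh (fun c' => k c' + M c') (w + p) c = sh k p c := by
    apply sh_congr
    · intro i hi; rw [hMz i hi]; ring
    · intro i hi
      have h1 : (w + p) i = w i + p i := rfl
      rw [h1, hw i, hMz i hi]
      norm_num
  simp only [Bn, hsh]
  have h2 : (w + p) c = w c + p c := rfl
  rw [h2, hw c]; ring

lemma translate_Tile {M : Fin d → ℤ} {w : Ed d} (hMz : ∀ i, isZ i → M i = 0)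
    (hw : ∀ c, w c = (M c : ℝ)) (k : Fin d → ℤ) :
    (fun p => w + p) '' Tile k = Tile (fun c => k c + M c) := by
  ext p
  constructor
  · rintro ⟨p', hp', rfl⟩
    intro c
    rw [Bn_translate hMz hw k p' c]
    have h := hp' c
    push_cast
    exact ⟨by linarith [h.1], by linarith [h.2]⟩
  · intro hp
    have hpp : w + (p - w) = p := by
      ext c'
      show w c' + (p c' - w c') = p c'
      ring
    refine ⟨p - w, ?_, hpp⟩
    intro c
    have h := hp c
    rw [← hpp, Bn_translate hMz hw k (p - w) c] at h
    push_cast at h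
    exact ⟨by linarith [h.1], by linarith [h.2]⟩

lemma cv_image (w : Ed d) (P : Set (Ed d)) :
    (AffineIsometryEquiv.constVAdd ℝ (Ed d) w) '' P = (fun p => w + p) '' P := by
  apply Set.image_congr
  intro p _
  rfl

lemma V_subset_period {w : Ed d} (hw : w ∈ Vset d) : w ∈ periodVectors d (TT d) := by
  classical
  obtain ⟨hz, hnz⟩ := hw
  set M : Fin d → ℤ := fun c => if h : isZ c then 0 else Classical.choose (hnz c h) with hMdef
  have hMz : ∀ i, isZ i → M i = 0 := by intro i hi; simp [hMdef, hi]
  have hwM : ∀ c, w c = (M c : ℝ) := by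
    intro c
    by_cases h : isZ c
    · simp [hMdef, h, hz c h]
    · simp only [hMdef, dif_neg h]
      exact Classical.choose_spec (hnz c h)
  show (fun P => (AffineIsometryEquiv.constVAdd ℝ (Ed d) w) '' P) '' TT d = TT d
  ext S
  constructor
  · rintro ⟨P, ⟨k, rfl⟩, rfl⟩
    show (AffineIsometryEquiv.constVAdd ℝ (Ed d) w) '' Tile k ∈ TT d
    rw [cv_image, translate_Tile hMz hwM k]
    exact ⟨_, rfl⟩
  · rintro ⟨k, rfl⟩
    refine ⟨Tile (fun c => k c - M c), ⟨_, rfl⟩, ?_⟩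
    show (AffineIsometryEquiv.constVAdd ℝ (Ed d) w) '' Tile (fun c => k c - M c) = Tile k
    rw [cv_image, translate_Tile hMz hwM]
    congr 1
    funext c; ring

lemma period_tile_image {w : Ed d} (hp : w ∈ periodVectors d (TT d)) (k : Fin d → ℤ) :
    ∃ m, (fun p => w + p) '' Tile k = Tile m := by
  have hsym : (fun P => (AffineIsometryEquiv.constVAdd ℝ (Ed d) w) '' P) '' TT d = TT d := hp
  have h1 : (AffineIsometryEquiv.constVAdd ℝ (Ed d) w) '' Tile k ∈ TT d := by
    rw [← hsym]
    exact ⟨Tile k, ⟨k, rfl⟩, rfl⟩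
  obtain ⟨m, hm⟩ := h1
  exact ⟨m, by rw [← cv_image, hm]⟩

lemma period_corner_match {w : Ed d} {k m : Fin d → ℤ}
    (himg : (fun p => w + p) '' Tile k = Tile m)
    {q' : Ed d} (hq' : q' ∈ corners k) :
    ∃ q ∈ corners m, w + An k q' = An m q := by
  have hext : Set.extremePoints ℝ (Tile m) = (fun p => w + p) '' Set.extremePoints ℝ (Tile k) := by
    rw [← himg]
    exact extremePoints_image_affine (g := fun p => w + p) (h := fun p => p - w)
      (fun p => by ext c; show w c + (p c - w c) = p c; ring)
      (fun p => by ext c; show (w c + p c) - w c = p c; ring)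
      (fun a b p q hab => by
        ext c
        show w c + (a * p c + b * q c) = a * (w c + p c) + b * (w c + q c)
        linear_combination (-(w c)) * hab) _
  have h1 : w + An k q' ∈ Set.extremePoints ℝ (Tile m) := by
    rw [hext]
    refine ⟨An k q', ?_, rfl⟩
    rw [extremePoints_Tile]
    exact ⟨q', hq', rfl⟩
  rw [extremePoints_Tile] at h1
  obtain ⟨q, hq, heq⟩ := h1
  exact ⟨q, hq, heq.symm⟩

lemma two_choice {a b : ℝ} {mm : ℤ} (ha : a = (mm : ℝ) ∨ a = (mm : ℝ) + 1)
    (hb : b = (mm : ℝ) ∨ b = (mm : ℝ) + 1) (hab : b = a + 1) :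
    a = (mm : ℝ) ∧ b = (mm : ℝ) + 1 := by
  rcases ha with h | h <;> rcases hb with h2 | h2 <;> exact ⟨by linarith, by linarith⟩

lemma ff_zero : ff 0 = 0 := by unfold ff; norm_num
lemma ee_zero : ee 0 = 0 := ee_even ⟨0, by ring⟩

lemma period_z (hd : 2 ≤ d) {w : Ed d} (hp : w ∈ periodVectors d (TT d))
    {i : Fin d} (hi : isZ i) : w i = 0 := by
  classical
  have hjd := jd_bound hd
  have hi' : (i : ℕ) < jd d := hi
  have hc0lt : jd d + (i : ℕ) < d := by omega
  set c0 : Fin d := ⟨jd d + (i : ℕ), hc0lt⟩ with hc0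
  have hS0 : isS c0 := by
    constructor
    · show jd d ≤ jd d + (i : ℕ); omega
    · show jd d + (i : ℕ) < 2 * jd d; omega
  have hzo0 : zo c0 = i := by
    apply Fin.ext
    show (jd d + (i : ℕ)) - jd d = (i : ℕ)
    omega
  have hc0i : c0 ≠ i := by
    intro h
    have := congrArg (fun c : Fin d => (c : ℕ)) h
    simp only [hc0] at this
    omega
  have key : ∀ n : ℤ, ∃ V : ℤ, w i = (V : ℝ) ∧ ee (n + V) = ee n := by
    intro n
    set k : Fin d → ℤ := fun c => if c = i then n else 0 with hk
    have hki : k i = n := by simp [hk]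
    have hkc0 : k c0 = 0 := by simp [hk, hc0i]
    obtain ⟨m, himg⟩ := period_tile_image hp k
    -- four corners of the cube k
    set q1 : Ed d := WithLp.toLp 2 (fun c => (k c : ℝ)) with hq1def
    set q2 : Ed d := WithLp.toLp 2 (fun c => if c = c0 then (k c : ℝ) + 1 else (k c : ℝ)) with hq2def
    set q3 : Ed d := WithLp.toLp 2 (fun c => if c = i then (k c : ℝ) + 1 else (k c : ℝ)) with hq3def
    set q4 : Ed d := WithLp.toLp 2 (fun c => if c = i then (k c : ℝ) + 1
        else (if c = c0 then (k c : ℝ) + 1 else (k c : ℝ))) with hq4def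
    have hq1 : q1 ∈ corners k := fun c => Or.inl rfl
    have hq2 : q2 ∈ corners k := by
      intro c
      simp only [hq2def]
      split_ifs <;> [exact Or.inr rfl; exact Or.inl rfl]
    have hq3 : q3 ∈ corners k := by
      intro c
      simp only [hq3def]
      split_ifs <;> [exact Or.inr rfl; exact Or.inl rfl]
    have hq4 : q4 ∈ corners k := by
      intro c
      simp only [hq4def]
      split_ifs <;> [exact Or.inr rfl; exact Or.inr rfl; exact Or.inl rfl]
    obtain ⟨Q1, hQ1, hE1⟩ := period_corner_match himg hq1
    obtain ⟨Q2, hQ2, hE2⟩ := period_corner_match himg hq2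
    obtain ⟨Q3, hQ3, hE3⟩ := period_corner_match himg hq3
    obtain ⟨Q4, hQ4, hE4⟩ := period_corner_match himg hq4
    have coordEq : ∀ (q' Q : Ed d), w + An k q' = An m Q →
        ∀ c, w c + An k q' c = An m Q c := by
      intro q' Q h c
      have : (w + An k q') c = w c + An k q' c := rfl
      rw [← this, h]
    -- coordinate i equations
    have hq1i : q1 i = (n : ℝ) := by simp [hq1def, hki]
    have hq2i : q2 i = (n : ℝ) := by simp [hq2def, Ne.symm hc0i, hki]
    have hq3i : q3 i = (n : ℝ) + 1 := by simp [hq3def, hki]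
    have hq4i : q4 i = (n : ℝ) + 1 := by simp [hq4def, hki]
    have hiS : ¬ isS i := not_isS_of_isZ hi
    have hI1 : w i + q1 i = Q1 i := by
      have := coordEq q1 Q1 hE1 i
      rwa [An_apply_z hiS, An_apply_z hiS] at this
    have hI2 : w i + q2 i = Q2 i := by
      have := coordEq q2 Q2 hE2 i
      rwa [An_apply_z hiS, An_apply_z hiS] at this
    have hI3 : w i + q3 i = Q3 i := by
      have := coordEq q3 Q3 hE3 i
      rwa [An_apply_z hiS, An_apply_z hiS] at this
    have hI4 : w i + q4 i = Q4 i := by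
      have := coordEq q4 Q4 hE4 i
      rwa [An_apply_z hiS, An_apply_z hiS] at this
    have hres13 := two_choice (hQ1 i) (hQ3 i)
      (by rw [← hI1, ← hI3, hq1i, hq3i]; ring)
    have hres24 := two_choice (hQ2 i) (hQ4 i)
      (by rw [← hI2, ← hI4, hq2i, hq4i]; ring)
    -- value of w i
    have hV : w i = ((m i - n : ℤ) : ℝ) := by
      have := hI1
      rw [hq1i, hres13.1] at this
      push_cast
      linarith
    -- coordinate c0 equations
    have hAn : ∀ q' : Ed d, An k q' c0
        = q' c0 + ((ff n : ℝ) + (q' i - (n : ℝ)) * (ee n : ℝ)) := by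
      intro q'
      have h1 : An k q' c0 = q' c0 + ((ff (k (zo c0)) : ℝ)
          + (q' (zo c0) - (k (zo c0) : ℝ)) * (ee (k (zo c0)) : ℝ)) := by
        simp [An, sh, hS0]
      rw [h1, hzo0, hki]
    have hAnm : ∀ Q : Ed d, An m Q c0
        = Q c0 + ((ff (m i) : ℝ) + (Q i - (m i : ℝ)) * (ee (m i) : ℝ)) := by
      intro Q
      have h1 : An m Q c0 = Q c0 + ((ff (m (zo c0)) : ℝ)
          + (Q (zo c0) - (m (zo c0) : ℝ)) * (ee (m (zo c0)) : ℝ)) := by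
        simp [An, sh, hS0]
      rw [h1, hzo0]
    have hq1c0 : q1 c0 = 0 := by simp [hq1def, hkc0]
    have hq2c0 : q2 c0 = 1 := by simp [hq2def, hkc0]
    have hq3c0 : q3 c0 = 0 := by simp [hq3def, hc0i, hkc0]
    have hq4c0 : q4 c0 = 1 := by simp [hq4def, hc0i, hkc0]
    have hC1 : w c0 + (ff n : ℝ) = Q1 c0 + (ff (m i) : ℝ) := by
      have h := coordEq q1 Q1 hE1 c0
      rw [hAn q1, hAnm Q1, hq1c0, hq1i, hres13.1] at h
      linarith [h]
    have hC2 : w c0 + 1 + (ff n : ℝ) = Q2 c0 + (ff (m i) : ℝ) := by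
      have h := coordEq q2 Q2 hE2 c0
      rw [hAn q2, hAnm Q2, hq2c0, hq2i, hres24.1] at h
      linarith [h]
    have hC3 : w c0 + (ff n : ℝ) + (ee n : ℝ) = Q3 c0 + (ff (m i) : ℝ) + (ee (m i) : ℝ) := by
      have h := coordEq q3 Q3 hE3 c0
      rw [hAn q3, hAnm Q3, hq3c0, hq3i, hres13.2] at h
      push_cast at h ⊢
      linarith [h]
    have hC4 : w c0 + 1 + (ff n : ℝ) + (ee n : ℝ) = Q4 c0 + (ff (m i) : ℝ) + (ee (m i) : ℝ) := by
      have h := coordEq q4 Q4 hE4 c0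
      rw [hAn q4, hAnm Q4, hq4c0, hq4i, hres24.2] at h
      push_cast at h ⊢
      linarith [h]
    have hr12 := two_choice (hQ1 c0) (hQ2 c0) (by linarith [hC1, hC2])
    have hr34 := two_choice (hQ3 c0) (hQ4 c0) (by linarith [hC3, hC4])
    refine ⟨m i - n, hV, ?_⟩
    have heq : (ee (m i) : ℝ) = (ee n : ℝ) := by
      rw [hr12.1] at hC1
      rw [hr34.1] at hC3
      linarith [hC1, hC3]
    have harg : n + (m i - n) = m i := by ring
    rw [harg]
    exact_mod_cast heq
  obtain ⟨V, hV, _⟩ := key 0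
  by_cases hV0 : V = 0
  · rw [hV, hV0]; norm_num
  · exfalso
    obtain ⟨n, hn⟩ := ee_aperiodic hV0
    obtain ⟨V', hV', hee⟩ := key n
    have hVV : V' = V := by
      have : (V' : ℝ) = (V : ℝ) := by rw [← hV', ← hV]
      exact_mod_cast this
    rw [hVV] at hee
    exact hn hee

lemma period_int {w : Ed d} (hp : w ∈ periodVectors d (TT d))
    (hz : ∀ i, isZ i → w i = 0) {c : Fin d} (hc : ¬ isZ c) : ∃ mm : ℤ, w c = (mm : ℝ) := by
  obtain ⟨m, himg⟩ := period_tile_image hp (fun _ => 0)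
  set q1 : Ed d := WithLp.toLp 2 (fun _ => (0 : ℝ)) with hq1def
  have hq1 : q1 ∈ corners (fun _ => 0) := by
    intro c'
    exact Or.inl (by simp [hq1def])
  obtain ⟨Q1, hQ1, hE1⟩ := period_corner_match himg hq1
  have coordEq : ∀ c', w c' + An (fun _ => 0) q1 c' = An m Q1 c' := by
    intro c'
    have h1 : (w + An (fun _ => 0) q1) c' = w c' + An (fun _ => 0) q1 c' := rfl
    rw [← h1, hE1]
  by_cases hS : isS c
  · have hzoZ : isZ (zo c) := isZ_zo hS
    have h := coordEq c
    have hAn1 : An (fun _ => 0) q1 c = q1 c + ((ff 0 : ℝ)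
        + (q1 (zo c) - ((0 : ℤ) : ℝ)) * (ee 0 : ℝ)) := by
      simp [An, sh, hS]
    have hAnm : An m Q1 c = Q1 c + ((ff (m (zo c)) : ℝ)
        + (Q1 (zo c) - (m (zo c) : ℝ)) * (ee (m (zo c)) : ℝ)) := by
      simp [An, sh, hS]
    -- Q1 (zo c) value
    have hQzo : Q1 (zo c) = 0 := by
      have h2 := coordEq (zo c)
      rw [An_apply_z (not_isS_zo hS), An_apply_z (not_isS_zo hS)] at h2
      have : q1 (zo c) = 0 := by simp [hq1def]
      rw [this, hz (zo c) hzoZ] at h2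
      linarith [h2]
    rw [hAn1, hAnm, hQzo] at h
    rw [ff_zero, ee_zero] at h
    push_cast at h
    have hq1c : q1 c = 0 := by simp [hq1def]
    have hq1z : q1 (zo c) = 0 := by simp [hq1def]
    rcases hQ1 c with hc1 | hc1
    · refine ⟨m c + ff (m (zo c)) + (0 - m (zo c)) * ee (m (zo c)), ?_⟩
      rw [hc1] at h
      push_cast at h ⊢
      linarith [h, hq1c, hq1z]
    · refine ⟨m c + 1 + ff (m (zo c)) + (0 - m (zo c)) * ee (m (zo c)), ?_⟩
      rw [hc1] at h
      push_cast at h ⊢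
      linarith [h, hq1c, hq1z]
  · have h := coordEq c
    rw [An_apply_z hS, An_apply_z hS] at h
    have h' : w c + 0 = Q1 c := by simpa [hq1def] using h
    replace h := h' 
    rcases hQ1 c with hc1 | hc1
    · exact ⟨m c, by rw [← hc1]; linarith [h]⟩
    · exact ⟨m c + 1, by rw [show ((m c + 1 : ℤ) : ℝ) = (m c : ℝ) + 1 from by push_cast; ring, ← hc1]; linarith [h]⟩

lemma period_eq_V (hd : 2 ≤ d) : periodVectors d (TT d) = Vset d := by
  ext w
  constructor
  · intro hp
    have hz : ∀ i, isZ i → w i = 0 := fun i hi => period_z hd hp hi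
    exact ⟨hz, fun c hc => period_int hp hz hc⟩
  · exact V_subset_period
/-! ### The rank of the period lattice -/

lemma sum_apply'' {ι : Type*} (s : Finset ι) (f : ι → Ed d) (c : Fin d) :
    (∑ t ∈ s, f t) c = ∑ t ∈ s, f t c := by
  classical
  induction s using Finset.induction with
  | empty => rfl
  | insert _ _ h ih =>
    rw [Finset.sum_insert h, Finset.sum_insert h, add_apply', ih]

lemma finrank_span_V (hd : 2 ≤ d) :
    Module.finrank ℝ (Submodule.span ℝ (Vset d)) = (d + 2) / 2 := by
  classical
  have hjd := jd_bound hd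
  set nb := d - jd d with hnb
  have hemb : ∀ t : Fin nb, jd d + (t : ℕ) < d := by
    intro t
    have := t.isLt
    omega
  set e : Fin nb → Fin d := fun t => ⟨jd d + (t : ℕ), hemb t⟩ with he
  set b : Fin nb → Ed d := fun t => EuclideanSpace.single (e t) (1 : ℝ) with hb
  have heinj : Function.Injective e := by
    intro t1 t2 h
    apply Fin.ext
    have h2 := congrArg (fun c : Fin d => (c : ℕ)) h
    simp only [he] at h2
    omega
  have hetz : ∀ (t : Fin nb) (i : Fin d), isZ i → i ≠ e t := by
    intro t i hi h
    have h2 := congrArg (fun c : Fin d => (c : ℕ)) h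
    simp only [he] at h2
    have : (i : ℕ) < jd d := hi
    omega
  have hrange : Set.range b ⊆ Vset d := by
    rintro _ ⟨t, rfl⟩
    constructor
    · intro i hi
      simp only [hb]
      rw [EuclideanSpace.single_apply, if_neg (hetz t i hi)]
    · intro c _
      simp only [hb]
      rw [EuclideanSpace.single_apply]
      by_cases h : c = e t
      · exact ⟨1, by rw [if_pos h]; norm_num⟩
      · exact ⟨0, by rw [if_neg h]; norm_num⟩
  have hVspan : Vset d ⊆ ↑(Submodule.span ℝ (Set.range b)) := by
    intro w hw
    have hsum : w = ∑ t : Fin nb, w (e t) • b t := by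
      ext c
      rw [sum_apply'']
      have hterm : ∀ t : Fin nb, (w (e t) • b t) c = w (e t) * b t c := fun t => rfl
      rw [Finset.sum_congr rfl (fun t _ => hterm t)]
      by_cases hcz : isZ c
      · rw [Finset.sum_eq_zero, hw.1 c hcz]
        intro t _
        simp only [hb]
        rw [EuclideanSpace.single_apply, if_neg (hetz t c hcz)]
        ring
      · have hcge : jd d ≤ (c : ℕ) := by
          by_contra hlt
          exact hcz (by simpa [isZ] using Nat.lt_of_not_le hlt)
        have ht0lt : (c : ℕ) - jd d < nb := by
          have := c.isLt
          omega
        set t0 : Fin nb := ⟨(c : ℕ) - jd d, ht0lt⟩ with ht0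
        have het0 : e t0 = c := by
          apply Fin.ext
          simp only [he, ht0]
          omega
        rw [Finset.sum_eq_single t0]
        · rw [het0]
          simp only [hb]
          rw [EuclideanSpace.single_apply, if_pos het0.symm]
          ring
        · intro t _ hne
          simp only [hb]
          rw [EuclideanSpace.single_apply, if_neg]
          · ring
          · intro hh
            exact hne (heinj (by rw [het0, ← hh]))
        · intro hmem
          exact absurd (Finset.mem_univ t0) hmem
    rw [hsum]
    exact Submodule.sum_mem _ fun t _ =>
      Submodule.smul_mem _ _ (Submodule.subset_span ⟨t, rfl⟩)
  have hspan_eq : Submodule.span ℝ (Vset d) = Submodule.span ℝ (Set.range b) :=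
    le_antisymm (Submodule.span_le.2 hVspan)
      (Submodule.span_le.2 (hrange.trans Submodule.subset_span))
  rw [hspan_eq]
  have hbb : b = ⇑(EuclideanSpace.basisFun (Fin d) ℝ).toBasis ∘ e := by
    funext t
    rw [Function.comp_apply, OrthonormalBasis.coe_toBasis, EuclideanSpace.basisFun_apply]
  have hli : LinearIndependent ℝ b := by
    rw [hbb]
    exact (EuclideanSpace.basisFun (Fin d) ℝ).toBasis.linearIndependent.comp e heinj
  rw [finrank_span_eq_card hli, Fintype.card_fin]
  simp only [hnb, jd]
  omega

end MC
/-- For every `d ≥ 2` there is a face-to-face monocoronal (up to rigid motions)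
tiling of `ℝ^d` that is exactly `⌈(d+1)/2⌉`-periodic. -/
theorem exists_faceToFace_monocoronalRM_ceil_half_succ_periodic (hd : 2 ≤ d) :
    ∃ T : Set (Set (Ed d)), IsTiling d T ∧ FaceToFace d T ∧ MonocoronalRM d T ∧
      Module.finrank ℝ (Submodule.span ℝ (periodVectors d T)) = (d + 2) / 2 := by
  refine ⟨MC.TT d, MC.isTiling_TT, MC.faceToFace_TT, MC.monocoronalRM_TT hd, ?_⟩
  rw [MC.period_eq_V hd]
  exact MC.finrank_span_V hd
end
end
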